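/- arXiv:1706.00626 — 5 statements merged into one kernel-verified Lean document; each statement's English description precedes it below -/
import Mathlib

section
/- Let H be an infinite, finitely generated group. Then there exist a finite symmetric generating set S of H containing 1_H and a map ω : H → S × S, with components written ω(h) = (left(h), right(h)), such that: (a) for every h ∈ H, left(h · right(h)) = right(h)⁻¹ and right(h · left(h)) = left(h)⁻¹ (so that R(h) := h · right(h) and L(h) := h · left(h) are mutually inverse bijections of H); and (b) the induced ℤ-action n ↦ Rⁿ is free: for every h ∈ H and n ∈ ℤ, Rⁿ(h) = h implies n = 0. -/
namespace Stmt8Prop35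

open Subgroup Finset Function
open scoped Pointwise

variable {H : Type} [Group H] [DecidableEq H]

/-- products of symmetric generating sets exhaust the group -/
theorem inv_mem_pow (T : Finset H) (hsym : ∀ x ∈ T, x⁻¹ ∈ T) :
    ∀ k : ℕ, ∀ x ∈ T ^ k, x⁻¹ ∈ T ^ k := by
  intro k
  induction k with
  | zero => intro x hx; rw [pow_zero, Finset.mem_one] at *; simp [hx]
  | succ k ih =>
    intro x hx
    rw [pow_succ] at hx
    obtain ⟨a, ha, b, hb, rfl⟩ := Finset.mem_mul.mp hx
    rw [pow_succ']
    have : (a * b)⁻¹ = b⁻¹ * a⁻¹ := by group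
    rw [this]
    exact Finset.mul_mem_mul (hsym b hb) (ih a ha)

theorem exists_pow_mem (T : Finset H) (h1 : (1:H) ∈ T) (hsym : ∀ x ∈ T, x⁻¹ ∈ T)
    (hgen : Subgroup.closure (T : Set H) = ⊤) (h : H) : ∃ k : ℕ, h ∈ T ^ k := by
  have hh : h ∈ Subgroup.closure (T : Set H) := by rw [hgen]; trivial
  induction hh using Subgroup.closure_induction with
  | mem x hx => exact ⟨1, by simpa using hx⟩
  | one => exact ⟨0, by simp⟩
  | mul x y _ _ hx hy =>
    obtain ⟨k, hk⟩ := hx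
    obtain ⟨l, hl⟩ := hy
    exact ⟨k + l, by rw [pow_add]; exact Finset.mul_mem_mul hk hl⟩
  | inv x _ hx =>
    obtain ⟨k, hk⟩ := hx
    exact ⟨k, inv_mem_pow T hsym k x hk⟩

theorem countable_of_gen (T : Finset H) (h1 : (1:H) ∈ T) (hsym : ∀ x ∈ T, x⁻¹ ∈ T)
    (hgen : Subgroup.closure (T : Set H) = ⊤) : Countable H := by
  rw [← Set.countable_univ_iff]
  have hsub : (Set.univ : Set H) ⊆ ⋃ k : ℕ, ((T ^ k : Finset H) : Set H) := by
    intro x _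
    obtain ⟨k, hk⟩ := exists_pow_mem T h1 hsym hgen x
    exact Set.mem_iUnion.mpr ⟨k, hk⟩
  exact Set.Countable.mono hsub (Set.countable_iUnion fun k => (T ^ k).countable_toSet)


theorem max'_congr {α : Type*} [LinearOrder α] {s t : Finset α} (h : s = t)
    (hs : s.Nonempty) (ht : t.Nonempty) : s.max' hs = t.max' ht := by
  subst h; rfl

theorem min'_congr {α : Type*} [LinearOrder α] {s t : Finset α} (h : s = t)
    (hs : s.Nonempty) (ht : t.Nonempty) : s.min' hs = t.min' ht := by
  subst h; rfl

/-- All the data needed for the torsion construction. -/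
structure Setup (H : Type) [Group H] : Type where
  T : Finset H
  t : H
  one_mem : (1:H) ∈ T
  sym : ∀ x ∈ T, x⁻¹ ∈ T
  gen : Subgroup.closure (T : Set H) = ⊤
  tne : t ≠ 1
  tfin : orderOf t ≠ 0
  enc : H ⧸ Subgroup.zpowers t → ℕ
  enc_inj : Function.Injective enc

variable (S : Setup H)

abbrev Setup.Q (S : Setup H) : Type := H ⧸ Subgroup.zpowers S.t

noncomputable abbrev Setup.n (S : Setup H) : ℕ := orderOf S.t

def Setup.root (S : Setup H) : S.Q := QuotientGroup.mk 1

theorem Setup.n_pos : 0 < S.n := Nat.pos_of_ne_zero S.tfin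

theorem Setup.two_le_n : 2 ≤ S.n := by
  have h1 : S.n ≠ 1 := fun h => S.tne (orderOf_eq_one_iff.mp h)
  have h0 := S.n_pos
  omega

theorem Setup.tfo : IsOfFinOrder S.t := by
  rw [← orderOf_pos_iff]
  exact S.n_pos

theorem Setup.exists_repr (q : S.Q) : ∃ k : ℕ, ∃ g, g ∈ S.T ^ k ∧ (QuotientGroup.mk g : S.Q) = q := by
  obtain ⟨k, hk⟩ := exists_pow_mem S.T S.one_mem S.sym S.gen (Quotient.out q)
  exact ⟨k, Quotient.out q, hk, QuotientGroup.out_eq' q⟩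

open scoped Classical in
noncomputable def Setup.D (q : S.Q) : ℕ := Nat.find (S.exists_repr q)

theorem Setup.D_spec (q : S.Q) : ∃ g, g ∈ S.T ^ (S.D q) ∧ (QuotientGroup.mk g : S.Q) = q := by
  classical exact Nat.find_spec (S.exists_repr q)

theorem Setup.D_le {g : H} {k : ℕ} (hg : g ∈ S.T ^ k) : S.D (QuotientGroup.mk g : S.Q) ≤ k := by
  classical exact Nat.find_le ⟨g, hg, rfl⟩

theorem Setup.D_one : S.D S.root = 0 := by
  have : S.D (QuotientGroup.mk (1:H) : S.Q) ≤ 0 := S.D_le (by simp [Finset.mem_one])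
  simpa [Setup.root] using this

theorem Setup.eq_one_of_D_eq_zero {q : S.Q} (hq : S.D q = 0) : q = S.root := by
  obtain ⟨g, hg, hmk⟩ := S.D_spec q
  rw [hq, pow_zero, Finset.mem_one] at hg
  rw [hg] at hmk
  exact hmk.symm

theorem Setup.exists_parent {q : S.Q} (hq : S.D q ≠ 0) :
    ∃ c : S.Q, S.D c < S.D q ∧ ∃ g s, s ∈ S.T ∧ (QuotientGroup.mk g : S.Q) = c ∧
      (QuotientGroup.mk (g * s) : S.Q) = q := by
  obtain ⟨g, hg, hmk⟩ := S.D_spec q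
  obtain ⟨k, hk⟩ : ∃ k, S.D q = k + 1 := ⟨S.D q - 1, by omega⟩
  rw [hk, pow_succ] at hg
  obtain ⟨a, ha, s, hs, rfl⟩ := Finset.mem_mul.mp hg
  refine ⟨QuotientGroup.mk a, ?_, a, s, hs, rfl, hmk⟩
  calc S.D (QuotientGroup.mk a : S.Q) ≤ k := S.D_le ha
  _ < S.D q := by omega

noncomputable def Setup.p (q : S.Q) : S.Q :=
  if hq : S.D q = 0 then q else (S.exists_parent hq).choose

theorem Setup.p_root {q : S.Q} (hq : S.D q = 0) : S.p q = q := by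
  rw [Setup.p, dif_pos hq]

theorem Setup.D_p_lt {q : S.Q} (hq : S.D q ≠ 0) : S.D (S.p q) < S.D q := by
  rw [Setup.p, dif_neg hq]
  exact (S.exists_parent hq).choose_spec.1

theorem Setup.p_adj {q : S.Q} (hq : S.D q ≠ 0) :
    ∃ g s, s ∈ S.T ∧ (QuotientGroup.mk g : S.Q) = S.p q ∧ (QuotientGroup.mk (g * s) : S.Q) = q := by
  rw [Setup.p, dif_neg hq]
  exact (S.exists_parent hq).choose_spec.2

theorem Setup.p_ne {q : S.Q} (hq : S.D q ≠ 0) : S.p q ≠ q := by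
  intro h
  have := S.D_p_lt hq
  rw [h] at this
  omega

noncomputable instance Setup.instLinearOrder : LinearOrder S.Q :=
  LinearOrder.lift' (fun q => toLex (S.D q, S.enc q))
    (fun a b hab => S.enc_inj (congrArg (fun x => (ofLex x).2) hab))

theorem Setup.lt_iff {a b : S.Q} :
    a < b ↔ S.D a < S.D b ∨ (S.D a = S.D b ∧ S.enc a < S.enc b) := by
  show toLex (S.D a, S.enc a) < toLex (S.D b, S.enc b) ↔ _
  rw [Prod.Lex.lt_iff]
  exact Iff.rfl

theorem Setup.lt_of_D_lt {a b : S.Q} (h : S.D a < S.D b) : a < b :=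
  S.lt_iff.mpr (Or.inl h)

theorem Setup.D_le_of_lt {a b : S.Q} (h : a < b) : S.D a ≤ S.D b := by
  rcases S.lt_iff.mp h with h | ⟨h, _⟩
  · omega
  · omega

theorem Setup.p_lt {q : S.Q} (hq : S.D q ≠ 0) : S.p q < q :=
  S.lt_of_D_lt (S.D_p_lt hq)

theorem Setup.coset_decomp {g : H} {q : S.Q} (h : (QuotientGroup.mk g : S.Q) = q) :
    ∃ a : ℕ, a < S.n ∧ g = Quotient.out q * S.t ^ a := by
  have hmk : (QuotientGroup.mk (Quotient.out q) : S.Q) = QuotientGroup.mk g := by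
    rw [h, QuotientGroup.out_eq']
  have hmem : (Quotient.out q)⁻¹ * g ∈ Subgroup.zpowers S.t := QuotientGroup.eq.mp hmk
  have hmem' : (Quotient.out q)⁻¹ * g ∈ Submonoid.powers S.t :=
    S.tfo.mem_powers_iff_mem_zpowers.mpr hmem
  obtain ⟨m, hm⟩ := hmem'
  refine ⟨m % S.n, Nat.mod_lt _ S.n_pos, ?_⟩
  have : S.t ^ (m % S.n) = S.t ^ m := (pow_mod_orderOf S.t m)
  rw [this]
  rw [show (fun x => S.t ^ x) m = S.t ^ m from rfl] at hm
  rw [hm]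
  group

theorem Setup.out_mul_pow_mk (q : S.Q) (a : ℕ) :
    (QuotientGroup.mk (Quotient.out q * S.t ^ a) : S.Q) = q := by
  have : (QuotientGroup.mk (Quotient.out q * S.t ^ a) : S.Q) = QuotientGroup.mk (Quotient.out q) := by
    rw [eq_comm, QuotientGroup.eq]
    refine Subgroup.mem_zpowers_iff.mpr ⟨(a : ℤ), ?_⟩
    simp [zpow_natCast]
  rw [this, QuotientGroup.out_eq']

open scoped Classical in
noncomputable def Setup.children (q : S.Q) : Finset S.Q :=
  ((Finset.range S.n ×ˢ S.T).image fun x =>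
    (QuotientGroup.mk (Quotient.out q * S.t ^ x.1 * x.2) : S.Q)).filter
    fun c => S.p c = q ∧ S.D c ≠ 0

theorem Setup.mem_children_iff {c q : S.Q} :
    c ∈ S.children q ↔ S.p c = q ∧ S.D c ≠ 0 := by
  classical
  constructor
  · intro hc
    exact (Finset.mem_filter.mp hc).2
  · rintro ⟨hpc, hDc⟩
    rw [Setup.children]
    refine Finset.mem_filter.mpr ⟨?_, hpc, hDc⟩
    obtain ⟨g, s, hs, hg, hgs⟩ := S.p_adj hDc
    rw [hpc] at hg
    obtain ⟨a, ha, rfl⟩ := S.coset_decomp hg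
    refine Finset.mem_image.mpr ⟨(a, s), ?_, hgs⟩
    exact Finset.mem_product.mpr ⟨Finset.mem_range.mpr ha, hs⟩

theorem Setup.children_valid {c q : S.Q} (hc : c ∈ S.children q) : S.D c ≠ 0 :=
  (S.mem_children_iff.mp hc).2

theorem Setup.p_of_mem_children {c q : S.Q} (hc : c ∈ S.children q) : S.p c = c ∨ True := Or.inr trivial

theorem Setup.lt_of_mem_children {c q : S.Q} (hc : c ∈ S.children q) : q < c := by
  obtain ⟨hpc, hDc⟩ := S.mem_children_iff.mp hc
  have := S.D_p_lt hDc
  rw [hpc] at this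
  exact S.lt_of_D_lt this

theorem Setup.NeZeroN : NeZero S.n := ⟨S.tfin⟩

noncomputable def Setup.co : S.Q × ZMod S.n ≃ H := by
  haveI := S.NeZeroN
  refine Equiv.ofBijective (fun z => Quotient.out z.1 * S.t ^ (z.2.val)) ⟨?_, ?_⟩
  · rintro ⟨q, i⟩ ⟨q', j⟩ hij
    simp only at hij
    have h1 : q = q' := by
      have := congrArg (fun g => (QuotientGroup.mk g : S.Q)) hij
      simpa only [S.out_mul_pow_mk] using this
    subst h1
    have h2 : S.t ^ i.val = S.t ^ j.val := by
      exact mul_left_cancel hij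
    have h3 : i.val = j.val := by
      refine pow_injOn_Iio_orderOf ?_ ?_ h2
      · exact ZMod.val_lt i
      · exact ZMod.val_lt j
    have h4 : i = j := by
      have := congrArg (fun v => ((v : ℕ) : ZMod S.n)) h3
      simpa only [ZMod.natCast_rightInverse i, ZMod.natCast_rightInverse j] using this
    rw [h4]
  · intro h
    obtain ⟨a, ha, hrepr⟩ := S.coset_decomp (q := QuotientGroup.mk h) rfl
    refine ⟨(QuotientGroup.mk h, (a : ZMod S.n)), ?_⟩
    simp only
    rw [ZMod.val_natCast, Nat.mod_eq_of_lt ha]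
    exact hrepr.symm

theorem Setup.co_apply (q : S.Q) (i : ZMod S.n) :
    S.co (q, i) = Quotient.out q * S.t ^ (i.val) := rfl

theorem Setup.co_fst (q : S.Q) (i : ZMod S.n) :
    (QuotientGroup.mk (S.co (q, i)) : S.Q) = q := S.out_mul_pow_mk q i.val

theorem Setup.val_one' : (1 : ZMod S.n).val = 1 := by
  haveI := S.NeZeroN
  exact ZMod.val_one_eq_one_mod S.n ▸ Nat.mod_eq_of_lt S.two_le_n

theorem Setup.co_succ (q : S.Q) (i : ZMod S.n) :
    S.co (q, i + 1) = S.co (q, i) * S.t := by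
  haveI := S.NeZeroN
  rw [S.co_apply, S.co_apply, mul_assoc]
  congr 1
  rw [ZMod.val_add, S.val_one', pow_mod_orderOf, pow_succ]

theorem Setup.zone_ne_zero : (1 : ZMod S.n) ≠ 0 := by
  haveI : Fact (1 < S.n) := ⟨S.two_le_n⟩
  exact one_ne_zero

/-- The generic successor map, parameterized by a family of "active children" sets. -/
noncomputable def Setup.gsf (ch : S.Q → Finset S.Q) (z : S.Q × ZMod S.n) : S.Q × ZMod S.n :=
  if h1 : z.2 = 0 ∧ (ch z.1).Nonempty then ((ch z.1).max' h1.2, 2)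
  else if _h2 : z.2 = 1 ∧ z.1 ∈ ch (S.p z.1) then
    if h3 : ((ch (S.p z.1)).filter (· < z.1)).Nonempty then
      (((ch (S.p z.1)).filter (· < z.1)).max' h3, 2)
    else (S.p z.1, 1)
  else (z.1, z.2 + 1)

/-- The generic predecessor map. -/
noncomputable def Setup.glf (ch : S.Q → Finset S.Q) (w : S.Q × ZMod S.n) : S.Q × ZMod S.n :=
  if h1 : w.2 - 1 = 0 ∧ (ch w.1).Nonempty then ((ch w.1).min' h1.2, 1)
  else if _h2 : w.2 - 1 = 1 ∧ w.1 ∈ ch (S.p w.1) then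
    if h3 : ((ch (S.p w.1)).filter (w.1 < ·)).Nonempty then
      (((ch (S.p w.1)).filter (w.1 < ·)).min' h3, 1)
    else (S.p w.1, 0)
  else (w.1, w.2 - 1)

theorem Setup.glf_gsf (ch : S.Q → Finset S.Q)
    (hch : ∀ q c, c ∈ ch q → S.p c = q ∧ S.D c ≠ 0) (z : S.Q × ZMod S.n) :
    S.glf ch (S.gsf ch z) = z := by
  by_cases hA : z.2 = 0 ∧ (ch z.1).Nonempty
  · rw [Setup.gsf, dif_pos hA]
    set M := (ch z.1).max' hA.2 with hMdef
    have hM : M ∈ ch z.1 := Finset.max'_mem _ _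
    have hpM : S.p M = z.1 := (hch _ _ hM).1
    have h21 : (2 : ZMod S.n) - 1 = 1 := by ring
    rw [Setup.glf]
    rw [dif_neg (by simp only [h21]; exact fun hc => S.zone_ne_zero hc.1)]
    rw [dif_pos (by refine ⟨h21, ?_⟩; rw [hpM]; exact hM)]
    rw [dif_neg ?hns]
    case hns =>
      intro hne
      obtain ⟨c, hc⟩ := hne
      rw [hpM] at hc
      obtain ⟨hc1, hc2⟩ := Finset.mem_filter.mp hc
      exact absurd (Finset.le_max' _ c hc1) (not_le.mpr hc2)
    rw [hpM, ← hA.1]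
  · by_cases hB : z.2 = 1 ∧ z.1 ∈ ch (S.p z.1)
    · by_cases h3 : ((ch (S.p z.1)).filter (· < z.1)).Nonempty
      · rw [Setup.gsf, dif_neg hA, dif_pos hB, dif_pos h3]
        set M := ((ch (S.p z.1)).filter (· < z.1)).max' h3 with hMdef
        have hM' : M ∈ (ch (S.p z.1)).filter (· < z.1) := Finset.max'_mem _ _
        have hM : M ∈ ch (S.p z.1) := (Finset.mem_filter.mp hM').1
        have hMlt : M < z.1 := (Finset.mem_filter.mp hM').2
        have hpM : S.p M = S.p z.1 := (hch _ _ hM).1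
        have h21 : (2 : ZMod S.n) - 1 = 1 := by ring
        rw [Setup.glf]
        rw [dif_neg (by simp only [h21]; exact fun hc => S.zone_ne_zero hc.1)]
        rw [dif_pos (by refine ⟨h21, ?_⟩; rw [hpM]; exact hM)]
        have hNE : ((ch (S.p (M : S.Q))).filter ((M : S.Q) < ·)).Nonempty := by
          refine ⟨z.1, ?_⟩
          rw [hpM]
          exact Finset.mem_filter.mpr ⟨hB.2, hMlt⟩
        rw [dif_pos hNE]
        have hmin : ((ch (S.p (M : S.Q))).filter ((M : S.Q) < ·)).min' hNE = z.1 := by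
          refine le_antisymm ?_ ?_
          · refine Finset.min'_le _ _ ?_
            rw [hpM]
            exact Finset.mem_filter.mpr ⟨hB.2, hMlt⟩
          · refine Finset.le_min' _ _ _ ?_
            intro c hc
            rw [hpM] at hc
            obtain ⟨hc1, hc2⟩ := Finset.mem_filter.mp hc
            by_contra hlt
            push_neg at hlt
            have : c ∈ (ch (S.p z.1)).filter (· < z.1) := Finset.mem_filter.mpr ⟨hc1, hlt⟩
            exact absurd hc2 (not_lt.mpr (Finset.le_max' _ c this))
        rw [hmin, ← hB.1]
      · rw [Setup.gsf, dif_neg hA, dif_pos hB, dif_neg h3]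
        have h110 : (1 : ZMod S.n) - 1 = 0 := sub_self 1
        rw [Setup.glf]
        rw [dif_pos (⟨h110, ⟨z.1, hB.2⟩⟩ : (1:ZMod S.n) - 1 = 0 ∧ (ch (S.p z.1)).Nonempty)]
        have hmin : (ch (S.p z.1)).min' ⟨z.1, hB.2⟩ = z.1 := by
          refine le_antisymm (Finset.min'_le _ _ hB.2) ?_
          refine Finset.le_min' _ _ _ ?_
          intro c hc
          by_contra hlt
          push_neg at hlt
          have : c ∈ (ch (S.p z.1)).filter (· < z.1) := Finset.mem_filter.mpr ⟨hc, hlt⟩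
          exact h3 ⟨c, this⟩
        rw [hmin, ← hB.1]
    · rw [Setup.gsf, dif_neg hA, dif_neg hB, Setup.glf]
      have hv : z.2 + 1 - 1 = z.2 := add_sub_cancel_right z.2 1
      rw [dif_neg (by simp only [hv]; exact hA), dif_neg (by simp only [hv]; exact hB)]
      simp only [hv]

theorem Setup.gsf_glf (ch : S.Q → Finset S.Q)
    (hch : ∀ q c, c ∈ ch q → S.p c = q ∧ S.D c ≠ 0) (w : S.Q × ZMod S.n) :
    S.gsf ch (S.glf ch w) = w := by
  by_cases hA : w.2 - 1 = 0 ∧ (ch w.1).Nonempty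
  · rw [Setup.glf, dif_pos hA]
    set m := (ch w.1).min' hA.2 with hmdef
    have hm : m ∈ ch w.1 := Finset.min'_mem _ _
    have hpm : S.p m = w.1 := (hch _ _ hm).1
    rw [Setup.gsf]
    rw [dif_neg (fun hc => S.zone_ne_zero hc.1)]
    rw [dif_pos (by refine ⟨rfl, ?_⟩; rw [hpm]; exact hm)]
    rw [dif_neg ?hps]
    case hps =>
      intro hne
      obtain ⟨c, hc⟩ := hne
      rw [hpm] at hc
      obtain ⟨hc1, hc2⟩ := Finset.mem_filter.mp hc
      exact absurd (Finset.min'_le _ c hc1) (not_le.mpr hc2)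
    have hw2 : w.2 = 1 := by
      have := sub_eq_zero.mp hA.1
      exact this
    rw [hpm, ← hw2]
  · by_cases hB : w.2 - 1 = 1 ∧ w.1 ∈ ch (S.p w.1)
    · have hw2 : w.2 = 2 := by
        have h' := sub_eq_iff_eq_add.mp hB.1
        rw [h', one_add_one_eq_two]
      by_cases h3 : ((ch (S.p w.1)).filter (w.1 < ·)).Nonempty
      · rw [Setup.glf, dif_neg hA, dif_pos hB, dif_pos h3]
        set m := ((ch (S.p w.1)).filter (w.1 < ·)).min' h3 with hmdef
        have hm' : m ∈ (ch (S.p w.1)).filter (w.1 < ·) := Finset.min'_mem _ _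
        have hm : m ∈ ch (S.p w.1) := (Finset.mem_filter.mp hm').1
        have hmgt : w.1 < m := (Finset.mem_filter.mp hm').2
        have hpm : S.p m = S.p w.1 := (hch _ _ hm).1
        rw [Setup.gsf]
        rw [dif_neg (fun hc => S.zone_ne_zero hc.1)]
        rw [dif_pos (by refine ⟨rfl, ?_⟩; rw [hpm]; exact hm)]
        have hNE : ((ch (S.p (m : S.Q))).filter (· < (m : S.Q))).Nonempty := by
          refine ⟨w.1, ?_⟩
          rw [hpm]
          exact Finset.mem_filter.mpr ⟨hB.2, hmgt⟩
        rw [dif_pos hNE]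
        have hmax : ((ch (S.p (m : S.Q))).filter (· < (m : S.Q))).max' hNE = w.1 := by
          refine le_antisymm ?_ ?_
          · refine Finset.max'_le _ _ _ ?_
            intro c hc
            rw [hpm] at hc
            obtain ⟨hc1, hc2⟩ := Finset.mem_filter.mp hc
            by_contra hlt
            push_neg at hlt
            have : c ∈ (ch (S.p w.1)).filter (w.1 < ·) := Finset.mem_filter.mpr ⟨hc1, hlt⟩
            exact absurd hc2 (not_lt.mpr (Finset.min'_le _ c this))
          · refine Finset.le_max' _ _ ?_
            rw [hpm]
            exact Finset.mem_filter.mpr ⟨hB.2, hmgt⟩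
        rw [hmax, ← hw2]
      · rw [Setup.glf, dif_neg hA, dif_pos hB, dif_neg h3]
        rw [Setup.gsf]
        have hNE : (ch (S.p w.1)).Nonempty := ⟨w.1, hB.2⟩
        rw [dif_pos (⟨rfl, hNE⟩ : (0:ZMod S.n) = 0 ∧ (ch (S.p w.1)).Nonempty)]
        have hmax : (ch (S.p w.1)).max' hNE = w.1 := by
          refine le_antisymm ?_ (Finset.le_max' _ _ hB.2)
          refine Finset.max'_le _ _ _ ?_
          intro c hc
          by_contra hlt
          push_neg at hlt
          exact h3 ⟨c, Finset.mem_filter.mpr ⟨hc, hlt⟩⟩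
        rw [hmax, ← hw2]
    · rw [Setup.glf, dif_neg hA, dif_neg hB, Setup.gsf]
      rw [dif_neg hA, dif_neg hB]
      simp only [sub_add_cancel]

theorem Setup.gsf_swap (ch ch' : S.Q → Finset S.Q) (M : S.Q)
    (hDM : S.D M ≠ 0)
    (hch' : ∀ q, ch' q = if q = S.p M then insert M (ch q) else ch q)
    (hlt : ∀ q c, c ∈ ch q → c < M) (z : S.Q × ZMod S.n) :
    S.gsf ch' z = S.gsf ch (Equiv.swap (S.p M, (0:ZMod S.n)) (M, (1:ZMod S.n)) z) := by
  have hMnotch : M ∉ ch (S.p M) := fun h => lt_irrefl M (hlt _ _ h)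
  have hccPM : ch' (S.p M) = insert M (ch (S.p M)) := by rw [hch', if_pos rfl]
  have h10 : (1 : ZMod S.n) ≠ 0 := S.zone_ne_zero
  by_cases hz1 : z = (S.p M, (0:ZMod S.n))
  · subst hz1
    rw [Equiv.swap_apply_left]
    have hNE : (ch' (S.p M)).Nonempty := by rw [hccPM]; exact ⟨M, Finset.mem_insert_self _ _⟩
    rw [Setup.gsf, dif_pos ⟨rfl, hNE⟩]
    have hmax : (ch' (S.p M)).max' hNE = M := by
      refine le_antisymm ?_ (Finset.le_max' _ _ (by rw [hccPM]; exact Finset.mem_insert_self _ _))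
      refine Finset.max'_le _ _ _ ?_
      intro c hc
      rw [hccPM] at hc
      rcases Finset.mem_insert.mp hc with rfl | hc
      · exact le_refl _
      · exact le_of_lt (hlt _ _ hc)
    rw [hmax]
    rw [Setup.gsf, dif_neg (fun hc => h10 hc.1), dif_neg (fun hc => hMnotch hc.2)]
    have : (1 : ZMod S.n) + 1 = 2 := one_add_one_eq_two
    simp only [this]
  · by_cases hz2 : z = (M, (1:ZMod S.n))
    · subst hz2
      rw [Equiv.swap_apply_right]
      have hpMM : S.p M ≠ M := S.p_ne hDM
      have hfil : (ch' (S.p M)).filter (· < M) = ch (S.p M) := by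
        rw [hccPM]
        ext c
        simp only [Finset.mem_filter, Finset.mem_insert]
        constructor
        · rintro ⟨rfl | hc, hlt'⟩
          · exact absurd hlt' (lt_irrefl _)
          · exact hc
        · intro hc
          exact ⟨Or.inr hc, hlt _ _ hc⟩
      have hmemM : M ∈ ch' (S.p M) := by rw [hccPM]; exact Finset.mem_insert_self _ _
      simp only [Setup.gsf]
      rw [dif_neg (fun hc => h10 hc.1)]
      rw [dif_pos (⟨trivial, hmemM⟩ : True ∧ M ∈ ch' (S.p M))]
      by_cases hne : (ch (S.p M)).Nonempty
      · have hne' : ((ch' (S.p M)).filter (· < M)).Nonempty := by rw [hfil]; exact hne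
        rw [dif_pos hne', dif_pos (⟨trivial, hne⟩ : True ∧ (ch (S.p M)).Nonempty)]
        have hmx : ((ch' (S.p M)).filter (· < M)).max' hne' = (ch (S.p M)).max' hne := by
          apply le_antisymm
          · refine Finset.max'_le _ _ _ ?_
            intro c hc
            rw [hfil] at hc
            exact Finset.le_max' _ _ hc
          · refine Finset.le_max' _ _ ?_
            rw [hfil]
            exact Finset.max'_mem _ _
        rw [hmx]
      · have hne' : ¬ ((ch' (S.p M)).filter (· < M)).Nonempty := by rw [hfil]; exact hne
        rw [dif_neg hne', dif_neg (fun hc => hne hc.2), dif_neg (fun hc => h10 hc.1.symm)]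
        simp only [zero_add]
    · rw [Equiv.swap_apply_of_ne_of_ne hz1 hz2]
      by_cases h0 : z.2 = 0
      · have hz1' : z.1 ≠ S.p M := by
          intro h
          exact hz1 (Prod.ext h h0)
        have hc1 : ch' z.1 = ch z.1 := by rw [hch', if_neg hz1']
        have h01 : z.2 ≠ 1 := by rw [h0]; exact fun hc => h10 hc.symm
        rw [Setup.gsf, Setup.gsf]
        by_cases hne : (ch z.1).Nonempty
        · have hne' : (ch' z.1).Nonempty := by rw [hc1]; exact hne
          rw [dif_pos ⟨h0, hne'⟩, dif_pos ⟨h0, hne⟩]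
          exact Prod.ext (max'_congr hc1 hne' hne) rfl
        · have hne' : ¬ (ch' z.1).Nonempty := by rw [hc1]; exact hne
          rw [dif_neg (fun hc => hne' hc.2), dif_neg (fun hc => h01 hc.1),
            dif_neg (fun hc => hne hc.2), dif_neg (fun hc => h01 hc.1)]
      · by_cases h1 : z.2 = 1
        · have hz1M : z.1 ≠ M := by
            intro h
            exact hz2 (Prod.ext h h1)
          rw [Setup.gsf, Setup.gsf, dif_neg (fun hc => h0 hc.1)]
          by_cases hpp : S.p z.1 = S.p M
          · have hcc : ch' (S.p z.1) = insert M (ch (S.p z.1)) := by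
              rw [hch', if_pos hpp]
            by_cases hmem : z.1 ∈ ch (S.p z.1)
            · have hfilter : (ch' (S.p z.1)).filter (· < z.1) =
                  (ch (S.p z.1)).filter (· < z.1) := by
                rw [hcc]
                ext c
                simp only [Finset.mem_filter, Finset.mem_insert]
                constructor
                · rintro ⟨rfl | hc, hlt'⟩
                  · exact absurd hlt' (not_lt.mpr (le_of_lt (hlt _ _ hmem)))
                  · exact ⟨hc, hlt'⟩
                · rintro ⟨hc, hlt'⟩
                  exact ⟨Or.inr hc, hlt'⟩
              have hmem' : z.1 ∈ ch' (S.p z.1) := by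
                rw [hcc]; exact Finset.mem_insert_of_mem hmem
              rw [dif_pos ⟨h1, hmem'⟩]
              by_cases h3 : ((ch (S.p z.1)).filter (· < z.1)).Nonempty
              · have h3' : ((ch' (S.p z.1)).filter (· < z.1)).Nonempty := by
                  rw [hfilter]; exact h3
                rw [dif_pos h3', dif_neg (fun hc => h0 hc.1), dif_pos ⟨h1, hmem⟩, dif_pos h3]
                exact Prod.ext (max'_congr hfilter h3' h3) rfl
              · have h3' : ¬ ((ch' (S.p z.1)).filter (· < z.1)).Nonempty := by
                  rw [hfilter]; exact h3
                rw [dif_neg h3', dif_neg (fun hc => h0 hc.1), dif_pos ⟨h1, hmem⟩, dif_neg h3]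
            · have hmem' : z.1 ∉ ch' (S.p z.1) := by
                rw [hcc]
                intro hc
                rcases Finset.mem_insert.mp hc with h | h
                · exact hz1M h
                · exact hmem h
              rw [dif_neg (fun hc => hmem' hc.2), dif_neg (fun hc => h0 hc.1),
                dif_neg (fun hc => hmem hc.2)]
          · have hcc : ch' (S.p z.1) = ch (S.p z.1) := by rw [hch', if_neg hpp]
            by_cases hmem : z.1 ∈ ch (S.p z.1)
            · have hmem' : z.1 ∈ ch' (S.p z.1) := by rw [hcc]; exact hmem
              rw [dif_pos ⟨h1, hmem'⟩]
              by_cases h3 : ((ch (S.p z.1)).filter (· < z.1)).Nonempty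
              · have h3' : ((ch' (S.p z.1)).filter (· < z.1)).Nonempty := by
                  rw [hcc]; exact h3
                rw [dif_pos h3', dif_neg (fun hc => h0 hc.1), dif_pos ⟨h1, hmem⟩, dif_pos h3]
                exact Prod.ext (max'_congr (by rw [hcc]) h3' h3) rfl
              · have h3' : ¬ ((ch' (S.p z.1)).filter (· < z.1)).Nonempty := by
                  rw [hcc]; exact h3
                rw [dif_neg h3', dif_neg (fun hc => h0 hc.1), dif_pos ⟨h1, hmem⟩, dif_neg h3]
            · have hmem' : z.1 ∉ ch' (S.p z.1) := by rw [hcc]; exact hmem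
              rw [dif_neg (fun hc => hmem' hc.2), dif_neg (fun hc => h0 hc.1),
                dif_neg (fun hc => hmem hc.2)]
        · rw [Setup.gsf, Setup.gsf, dif_neg (fun hc => h0 hc.1), dif_neg (fun hc => h1 hc.1),
            dif_neg (fun hc => h0 hc.1), dif_neg (fun hc => h1 hc.1)]

noncomputable def Setup.gperm (ch : S.Q → Finset S.Q)
    (hch : ∀ q c, c ∈ ch q → S.p c = q ∧ S.D c ≠ 0) : Equiv.Perm (S.Q × ZMod S.n) :=
  ⟨S.gsf ch, S.glf ch, S.glf_gsf ch hch, S.gsf_glf ch hch⟩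

theorem Setup.chE_spec (E : Finset S.Q) :
    ∀ q c, c ∈ S.children q ∩ E → S.p c = q ∧ S.D c ≠ 0 := fun _ c hc =>
  S.mem_children_iff.mp (Finset.mem_inter.mp hc).1

noncomputable def Setup.sE (E : Finset S.Q) : Equiv.Perm (S.Q × ZMod S.n) :=
  S.gperm (fun q => S.children q ∩ E) (S.chE_spec E)

noncomputable def Setup.sigma : Equiv.Perm (S.Q × ZMod S.n) :=
  S.gperm S.children (fun _ _ hc => S.mem_children_iff.mp hc)

theorem Setup.sE_apply (E : Finset S.Q) (z : S.Q × ZMod S.n) :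
    S.sE E z = S.gsf (fun q => S.children q ∩ E) z := rfl

theorem Setup.sigma_apply (z : S.Q × ZMod S.n) : S.sigma z = S.gsf S.children z := rfl

theorem Setup.sE_insert (E : Finset S.Q) (M : S.Q) (hDM : S.D M ≠ 0)
    (hlt : ∀ c ∈ E, c < M) :
    S.sE (insert M E) = S.sE E * Equiv.swap (S.p M, (0:ZMod S.n)) (M, (1:ZMod S.n)) := by
  apply Equiv.ext
  intro z
  have hch' : ∀ q : S.Q, S.children q ∩ insert M E =
      if q = S.p M then insert M (S.children q ∩ E) else S.children q ∩ E := by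
    intro q
    by_cases hq : q = S.p M
    · rw [if_pos hq]
      ext x
      simp only [Finset.mem_inter, Finset.mem_insert]
      constructor
      · rintro ⟨hx, rfl | hxE⟩
        · exact Or.inl rfl
        · exact Or.inr ⟨hx, hxE⟩
      · rintro (rfl | ⟨hx, hxE⟩)
        · exact ⟨S.mem_children_iff.mpr ⟨hq.symm, hDM⟩, Or.inl rfl⟩
        · exact ⟨hx, Or.inr hxE⟩
    · rw [if_neg hq]
      ext x
      simp only [Finset.mem_inter, Finset.mem_insert]
      constructor
      · rintro ⟨hx, rfl | hxE⟩
        · exact absurd (S.mem_children_iff.mp hx).1.symm hq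
        · exact ⟨hx, hxE⟩
      · rintro ⟨hx, hxE⟩
        exact ⟨hx, Or.inr hxE⟩
  have hrhs : (S.sE E * Equiv.swap (S.p M, (0:ZMod S.n)) (M, (1:ZMod S.n))) z =
      S.sE E (Equiv.swap (S.p M, (0:ZMod S.n)) (M, (1:ZMod S.n)) z) := rfl
  rw [hrhs]
  exact S.gsf_swap _ _ M hDM hch' (fun q c hc => hlt c (Finset.mem_inter.mp hc).2) z

section Merge

variable {α : Type} [DecidableEq α]

theorem zpow_fix (τ : Equiv.Perm α) {x : α} (h : τ x = x) : ∀ k : ℤ, (τ ^ k) x = x := by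
  intro k
  induction k using Int.induction_on with
  | zero => simp
  | succ i ih =>
    rw [zpow_add, zpow_one, Equiv.Perm.mul_apply, h, ih]
  | pred i ih =>
    rw [sub_eq_add_neg, zpow_add, Equiv.Perm.mul_apply]
    have hx : (τ ^ (-1 : ℤ)) x = x := by
      rw [zpow_neg_one]
      nth_rewrite 1 [← h]
      exact Equiv.symm_apply_apply τ x
    rw [hx, ih]

theorem perm_period_trans {τ : Equiv.Perm α} {x y : α} {N : ℕ} (hN : (τ ^ N) x = x)
    (hxy : τ.SameCycle x y) : (τ ^ N) y = y := by
  obtain ⟨j, hj⟩ := hxy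
  subst hj
  have h1 : (τ ^ (N:ℤ)) x = x := by rw [zpow_natCast]; exact hN
  calc (τ ^ N) ((τ ^ j) x) = (τ ^ (N:ℤ)) ((τ ^ j) x) := by rw [zpow_natCast]
  _ = (τ ^ ((N:ℤ) + j)) x := by rw [zpow_add, Equiv.Perm.mul_apply]
  _ = (τ ^ (j + (N:ℤ))) x := by rw [add_comm]
  _ = (τ ^ j) ((τ ^ (N:ℤ)) x) := by rw [zpow_add, Equiv.Perm.mul_apply]
  _ = (τ ^ j) x := by rw [h1]

theorem samecycle_nat {τ : Equiv.Perm α} {x z : α} {m : ℕ} (hm : 0 < m)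
    (hp : (τ ^ m) x = x) (hs : τ.SameCycle x z) : ∃ i, i < m ∧ (τ ^ i) x = z := by
  obtain ⟨j, hj⟩ := hs
  have hmz : (0:ℤ) < (m:ℤ) := by exact_mod_cast hm
  have hper : (τ ^ (m:ℤ)) x = x := by rw [zpow_natCast]; exact hp
  have h2 : (τ ^ ((m:ℤ) * (j / (m:ℤ)))) x = x := by
    rw [zpow_mul]
    exact zpow_fix _ hper _
  have key : (τ ^ (j % (m:ℤ))) x = z := by
    have : (τ ^ (j % (m:ℤ))) x = (τ ^ (j % (m:ℤ))) ((τ ^ ((m:ℤ) * (j / (m:ℤ)))) x) := by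
      rw [h2]
    rw [this, ← Equiv.Perm.mul_apply, ← zpow_add, Int.emod_add_mul_ediv]
    exact hj
  refine ⟨(j % (m:ℤ)).toNat, ?_, ?_⟩
  · have h3 : j % (m:ℤ) < m := Int.emod_lt_of_pos j hmz
    omega
  · have h4 : ((j % (m:ℤ)).toNat : ℤ) = j % (m:ℤ) :=
      Int.toNat_of_nonneg (Int.emod_nonneg j (by omega))
    rw [← zpow_natCast, h4]
    exact key

theorem merge_lemma {τ : Equiv.Perm α} {b c : α} (hbc : ¬ τ.SameCycle b c)
    (hfin : ∀ z, ∃ q, 0 < q ∧ (τ ^ q) z = z) :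
    (∀ z, ∃ q, 0 < q ∧ ((τ * Equiv.swap b c) ^ q) z = z) ∧
    (∀ z, (τ.SameCycle z b ∨ τ.SameCycle z c) → (τ * Equiv.swap b c).SameCycle z b) := by
  classical
  set τ' := τ * Equiv.swap b c with hτ'
  have happ : ∀ x, τ' x = τ (Equiv.swap b c x) := fun x => rfl
  have hb := hfin b
  have hc := hfin c
  set qb := Nat.find hb with hqbdef
  set qc := Nat.find hc with hqcdef
  obtain ⟨hqb0, hqbfix⟩ := Nat.find_spec hb
  obtain ⟨hqc0, hqcfix⟩ := Nat.find_spec hc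
  have hqbmin : ∀ i, 0 < i → i < qb → (τ ^ i) b ≠ b :=
    fun i h0 hlt hfix => Nat.find_min hb hlt ⟨h0, hfix⟩
  have hqcmin : ∀ i, 0 < i → i < qc → (τ ^ i) c ≠ c :=
    fun i h0 hlt hfix => Nat.find_min hc hlt ⟨h0, hfix⟩
  have hnotb : ∀ i : ℕ, (τ ^ i) c ≠ b := by
    intro i h
    exact hbc (Equiv.Perm.SameCycle.symm ⟨(i:ℤ), by rw [zpow_natCast]; exact h⟩)
  have hnotc : ∀ i : ℕ, (τ ^ i) b ≠ c := by
    intro i h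
    exact hbc ⟨(i:ℤ), by rw [zpow_natCast]; exact h⟩
  have key1 : ∀ j : ℕ, j + 1 ≤ qc → (τ' ^ (j+1)) b = (τ ^ (j+1)) c := by
    intro j
    induction j with
    | zero => intro _; rw [pow_one, pow_one, happ, Equiv.swap_apply_left]
    | succ j ih =>
      intro hle
      have hih := ih (by omega)
      rw [pow_succ', Equiv.Perm.mul_apply, hih, happ]
      have hswap : Equiv.swap b c ((τ ^ (j+1)) c) = (τ ^ (j+1)) c := by
        apply Equiv.swap_apply_of_ne_of_ne
        · exact hnotb _
        · exact hqcmin (j+1) (by omega) (by omega)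
      rw [hswap, ← Equiv.Perm.mul_apply, ← pow_succ']
  have key2 : ∀ j : ℕ, j + 1 ≤ qb → (τ' ^ (j+1)) c = (τ ^ (j+1)) b := by
    intro j
    induction j with
    | zero => intro _; rw [pow_one, pow_one, happ, Equiv.swap_apply_right]
    | succ j ih =>
      intro hle
      have hih := ih (by omega)
      rw [pow_succ', Equiv.Perm.mul_apply, hih, happ]
      have hswap : Equiv.swap b c ((τ ^ (j+1)) b) = (τ ^ (j+1)) b := by
        apply Equiv.swap_apply_of_ne_of_ne
        · exact hqbmin (j+1) (by omega) (by omega)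
        · exact hnotc _
      rw [hswap, ← Equiv.Perm.mul_apply, ← pow_succ']
  have hAc : (τ' ^ qc) b = c := by
    obtain ⟨j, hj⟩ : ∃ j, qc = j + 1 := ⟨qc - 1, by omega⟩
    rw [hj, key1 j (by omega), ← hj, hqcfix]
  have hAb : (τ' ^ qb) c = b := by
    obtain ⟨j, hj⟩ : ∃ j, qb = j + 1 := ⟨qb - 1, by omega⟩
    rw [hj, key2 j (by omega), ← hj, hqbfix]
  have hCb : (τ' ^ (qb + qc)) b = b := by
    rw [pow_add, Equiv.Perm.mul_apply, hAc, hAb]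
  have hSC1 : τ'.SameCycle b c := ⟨(qc:ℤ), by rw [zpow_natCast]; exact hAc⟩
  have transferb : ∀ z, τ.SameCycle z b → τ'.SameCycle z b := by
    intro z hz
    obtain ⟨i, hilt, hib⟩ := samecycle_nat hqb0 hqbfix hz.symm
    rcases Nat.eq_zero_or_pos i with rfl | hi0
    · rw [pow_zero] at hib
      simp only [Equiv.Perm.one_apply] at hib
      subst hib
      exact Equiv.Perm.SameCycle.refl τ' b
    · obtain ⟨j, rfl⟩ : ∃ j, i = j + 1 := ⟨i - 1, by omega⟩
      have hzc : (τ' ^ (j+1)) c = z := by rw [key2 j (by omega), hib]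
      have h1 : τ'.SameCycle c z := ⟨((j+1 : ℕ) : ℤ), by rw [zpow_natCast]; exact hzc⟩
      exact h1.symm.trans hSC1.symm
  have transferc : ∀ z, τ.SameCycle z c → τ'.SameCycle z b := by
    intro z hz
    obtain ⟨i, hilt, hib⟩ := samecycle_nat hqc0 hqcfix hz.symm
    rcases Nat.eq_zero_or_pos i with rfl | hi0
    · rw [pow_zero] at hib
      simp only [Equiv.Perm.one_apply] at hib
      subst hib
      exact hSC1.symm
    · obtain ⟨j, rfl⟩ : ∃ j, i = j + 1 := ⟨i - 1, by omega⟩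
      have hzb : (τ' ^ (j+1)) b = z := by rw [key1 j (by omega), hib]
      have h1 : τ'.SameCycle b z := ⟨((j+1 : ℕ) : ℤ), by rw [zpow_natCast]; exact hzb⟩
      exact h1.symm
  constructor
  · intro z
    by_cases hz : τ.SameCycle z b ∨ τ.SameCycle z c
    · have hzb : τ'.SameCycle z b := by
        rcases hz with h | h
        · exact transferb z h
        · exact transferc z h
      exact ⟨qb + qc, by omega, perm_period_trans hCb hzb.symm⟩
    · push_neg at hz
      have hfix : ∀ i : ℕ, (τ' ^ i) z = (τ ^ i) z := by
        intro i
        induction i with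
        | zero => simp
        | succ i ih =>
          rw [pow_succ', Equiv.Perm.mul_apply, ih, happ]
          have hswap : Equiv.swap b c ((τ ^ i) z) = (τ ^ i) z := by
            apply Equiv.swap_apply_of_ne_of_ne
            · intro h
              exact hz.1 ⟨(i:ℤ), by rw [zpow_natCast]; exact h⟩
            · intro h
              exact hz.2 ⟨(i:ℤ), by rw [zpow_natCast]; exact h⟩
          rw [hswap, ← Equiv.Perm.mul_apply, ← pow_succ']
      obtain ⟨q, hq0, hqf⟩ := hfin z
      exact ⟨q, hq0, by rw [hfix]; exact hqf⟩
  · intro z hz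
    rcases hz with h | h
    · exact transferb z h
    · exact transferc z h

end Merge

theorem Setup.gsf_step (ch : S.Q → Finset S.Q) {z : S.Q × ZMod S.n}
    (h1 : ch z.1 = ∅) (h2 : z.1 ∉ ch (S.p z.1)) : S.gsf ch z = (z.1, z.2 + 1) := by
  rw [Setup.gsf, dif_neg (fun hc => by rw [h1] at hc; exact Finset.not_nonempty_empty hc.2),
    dif_neg (fun hc => h2 hc.2)]

theorem Setup.sE_step_pow (E : Finset S.Q) (q0 : S.Q) (h1 : S.children q0 ∩ E = ∅)
    (h2 : q0 ∉ E) :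
    ∀ (k : ℕ) (i : ZMod S.n), ((S.sE E) ^ k) (q0, i) = (q0, i + (k : ZMod S.n)) := by
  intro k
  induction k with
  | zero => intro i; simp
  | succ k ih =>
    intro i
    rw [pow_succ', Equiv.Perm.mul_apply, ih i]
    have hstep : S.sE E (q0, i + (k : ZMod S.n)) = (q0, i + (k : ZMod S.n) + 1) := by
      rw [S.sE_apply]
      exact S.gsf_step _ h1 (fun hc => h2 (Finset.mem_inter.mp hc).2)
    rw [hstep]
    refine Prod.ext rfl ?_
    push_cast
    ring

theorem Setup.zmod_reach (i j : ZMod S.n) : i + (((j - i).val : ℕ) : ZMod S.n) = j := by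
  haveI := S.NeZeroN
  rw [ZMod.natCast_rightInverse (j - i)]
  ring

theorem Setup.main : ∀ E : Finset S.Q, (∀ c ∈ E, S.D c ≠ 0) →
    (∀ c ∈ E, S.p c ∈ E ∨ S.D (S.p c) = 0) →
    (∀ z, ∃ q, 0 < q ∧ ((S.sE E) ^ q) z = z) ∧
    (∀ z w, (z.1 ∈ E ∨ S.D z.1 = 0) → (w.1 ∈ E ∨ S.D w.1 = 0) → (S.sE E).SameCycle z w) := by
  intro E
  induction E using Finset.strongInduction with
  | _ E ih =>
  intro hval hanc
  rcases Finset.eq_empty_or_nonempty E with rfl | hne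
  · have hpow : ∀ (k : ℕ) (z : S.Q × ZMod S.n),
        ((S.sE ∅) ^ k) z = (z.1, z.2 + (k : ZMod S.n)) := by
      intro k z
      have := S.sE_step_pow ∅ z.1 (Finset.inter_empty _) (Finset.notMem_empty _) k z.2
      rw [← this]
    constructor
    · intro z
      refine ⟨S.n, S.n_pos, ?_⟩
      rw [hpow S.n z, ZMod.natCast_self, add_zero]
    · intro z w hz hw
      have hz1 : z.1 = S.root := S.eq_one_of_D_eq_zero (by simpa using hz)
      have hw1 : w.1 = S.root := S.eq_one_of_D_eq_zero (by simpa using hw)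
      refine ⟨(((w.2 - z.2).val : ℕ) : ℤ), ?_⟩
      rw [zpow_natCast, hpow]
      refine Prod.ext ?_ (S.zmod_reach z.2 w.2)
      rw [hz1, hw1]
  · set M := E.max' hne with hMdef
    have hME : M ∈ E := Finset.max'_mem _ _
    have hDM : S.D M ≠ 0 := hval M hME
    set E' := E.erase M with hE'def
    have hltM : ∀ c ∈ E', c < M := by
      intro c hc
      obtain ⟨hcne, hcE⟩ := Finset.mem_erase.mp hc
      exact lt_of_le_of_ne (Finset.le_max' _ _ hcE) hcne
    have hval' : ∀ c ∈ E', S.D c ≠ 0 := fun c hc => hval c (Finset.mem_of_mem_erase hc)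
    have hanc' : ∀ c ∈ E', S.p c ∈ E' ∨ S.D (S.p c) = 0 := by
      intro c hc
      rcases hanc c (Finset.mem_of_mem_erase hc) with h | h
      · left
        refine Finset.mem_erase.mpr ⟨?_, h⟩
        intro hpcM
        have h1 : S.p c < c := S.p_lt (hval' c hc)
        have h2 : c < M := hltM c hc
        rw [hpcM] at h1
        exact absurd (h1.trans h2) (lt_irrefl M)
      · right; exact h
    obtain ⟨IH1, IH2⟩ := ih E' (Finset.erase_ssubset hME) hval' hanc'
    have hiso : S.children M ∩ E' = ∅ := by
      rw [Finset.eq_empty_iff_forall_notMem]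
      intro c hc
      obtain ⟨hc1, hc2⟩ := Finset.mem_inter.mp hc
      exact absurd ((S.lt_of_mem_children hc1).trans (hltM c hc2)) (lt_irrefl M)
    have hMnotE' : M ∉ E' := fun h => (Finset.mem_erase.mp h).1 rfl
    have F1pow : ∀ (k : ℕ) (i : ZMod S.n),
        ((S.sE E') ^ k) (M, i) = (M, i + (k : ZMod S.n)) :=
      S.sE_step_pow E' M hiso hMnotE'
    have hbc : ¬ (S.sE E').SameCycle (S.p M, (0:ZMod S.n)) (M, (1:ZMod S.n)) := by
      intro h
      have hper : ((S.sE E') ^ S.n) (M, (1:ZMod S.n)) = (M, (1:ZMod S.n)) := by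
        rw [F1pow, ZMod.natCast_self, add_zero]
      obtain ⟨i, _, hfix⟩ := samecycle_nat S.n_pos hper h.symm
      rw [F1pow] at hfix
      have : M = S.p M := congrArg Prod.fst hfix
      exact (S.p_ne hDM) this.symm
    obtain ⟨R1, R2⟩ := merge_lemma hbc IH1
    have hswap : S.sE E = S.sE E' * Equiv.swap (S.p M, (0:ZMod S.n)) (M, (1:ZMod S.n)) := by
      have hE : insert M E' = E := Finset.insert_erase hME
      rw [← hE]
      exact S.sE_insert E' M hDM hltM
    constructor
    · intro z
      obtain ⟨q, hq, hfix⟩ := R1 z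
      exact ⟨q, hq, by rw [hswap]; exact hfix⟩
    · intro z w hz hw
      have hb' : S.p M ∈ E' ∨ S.D (S.p M) = 0 := by
        rcases hanc M hME with h | h
        · left
          exact Finset.mem_erase.mpr ⟨S.p_ne hDM, h⟩
        · right; exact h
      have main : ∀ y : S.Q × ZMod S.n, (y.1 ∈ E ∨ S.D y.1 = 0) →
          (S.sE E' * Equiv.swap (S.p M, (0:ZMod S.n)) (M, (1:ZMod S.n))).SameCycle
            y (S.p M, (0:ZMod S.n)) := by
        intro y hy
        rcases hy with hyE | hyD
        · by_cases hyM : y.1 = M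
          · have h1 : (S.sE E').SameCycle (M, (1:ZMod S.n)) y := by
              refine ⟨(((y.2 - 1).val : ℕ) : ℤ), ?_⟩
              rw [zpow_natCast, F1pow]
              exact Prod.ext hyM.symm (S.zmod_reach 1 y.2)
            exact R2 y (Or.inr h1.symm)
          · have hyE' : y.1 ∈ E' := Finset.mem_erase.mpr ⟨hyM, hyE⟩
            exact R2 y (Or.inl (IH2 y (S.p M, (0:ZMod S.n)) (Or.inl hyE') hb'))
        · exact R2 y (Or.inl (IH2 y (S.p M, (0:ZMod S.n)) (Or.inr hyD) hb'))
      rw [hswap]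
      exact (main z hz).trans (main w hw).symm

theorem Setup.gsf_congr (ch ch' : S.Q → Finset S.Q) (z : S.Q × ZMod S.n)
    (e1 : ch z.1 = ch' z.1) (e2 : ch (S.p z.1) = ch' (S.p z.1)) :
    S.gsf ch z = S.gsf ch' z := by
  rw [Setup.gsf, Setup.gsf]
  by_cases hA : z.2 = 0 ∧ (ch z.1).Nonempty
  · have hA' : (ch' z.1).Nonempty := by rw [← e1]; exact hA.2
    rw [dif_pos hA, dif_pos ⟨hA.1, hA'⟩]
    exact Prod.ext (max'_congr e1 hA.2 hA') rfl
  · have hA' : ¬ (z.2 = 0 ∧ (ch' z.1).Nonempty) := by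
      intro hc
      exact hA ⟨hc.1, by rw [e1]; exact hc.2⟩
    rw [dif_neg hA]
    by_cases hB : z.2 = 1 ∧ z.1 ∈ ch (S.p z.1)
    · have hB' : z.1 ∈ ch' (S.p z.1) := by rw [← e2]; exact hB.2
      rw [dif_pos hB]
      by_cases h3 : ((ch (S.p z.1)).filter (· < z.1)).Nonempty
      · have h3' : ((ch' (S.p z.1)).filter (· < z.1)).Nonempty := by
          rw [← e2]; exact h3
        rw [dif_pos h3, dif_neg hA', dif_pos ⟨hB.1, hB'⟩, dif_pos h3']
        exact Prod.ext (max'_congr (by rw [e2]) h3 h3') rfl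
      · have h3' : ¬ ((ch' (S.p z.1)).filter (· < z.1)).Nonempty := by
          rw [← e2]; exact h3
        rw [dif_neg h3, dif_neg hA', dif_pos ⟨hB.1, hB'⟩, dif_neg h3']
    · have hB' : ¬ (z.2 = 1 ∧ z.1 ∈ ch' (S.p z.1)) := by
        intro hc
        exact hB ⟨hc.1, by rw [e2]; exact hc.2⟩
      rw [dif_neg hB, dif_neg hA', dif_neg hB']

open scoped Classical in
noncomputable def Setup.anc (q : S.Q) : Finset S.Q :=
  ((Finset.range (S.D q + 1)).image fun i => S.p^[i] q).filter fun c => S.D c ≠ 0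

theorem Setup.mem_anc_iff {c q : S.Q} :
    c ∈ S.anc q ↔ (∃ i, i ≤ S.D q ∧ S.p^[i] q = c) ∧ S.D c ≠ 0 := by
  classical
  rw [Setup.anc]
  simp only [Finset.mem_filter, Finset.mem_image, Finset.mem_range]
  constructor
  · rintro ⟨⟨i, hi, hc⟩, hD⟩
    exact ⟨⟨i, by omega, hc⟩, hD⟩
  · rintro ⟨⟨i, hi, hc⟩, hD⟩
    exact ⟨⟨i, by omega, hc⟩, hD⟩

theorem Setup.anc_valid {c q : S.Q} (hc : c ∈ S.anc q) : S.D c ≠ 0 :=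
  (S.mem_anc_iff.mp hc).2

theorem Setup.D_iterate (q : S.Q) : ∀ i, S.D (S.p^[i] q) = 0 ∨ S.D (S.p^[i] q) + i ≤ S.D q := by
  intro i
  induction i with
  | zero => right; simp
  | succ i ih =>
    rw [Function.iterate_succ_apply']
    by_cases h0 : S.D (S.p^[i] q) = 0
    · left; rw [S.p_root h0]; exact h0
    · rcases ih with h | h
      · exact absurd h h0
      · right
        have := S.D_p_lt h0
        omega

theorem Setup.mem_anc_self {q : S.Q} (hq : S.D q ≠ 0) : q ∈ S.anc q :=
  S.mem_anc_iff.mpr ⟨⟨0, by omega, rfl⟩, hq⟩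

theorem Setup.p_mem_anc {q : S.Q} (hq : S.D (S.p q) ≠ 0) : S.p q ∈ S.anc q := by
  have hDq : S.D q ≠ 0 := by
    intro h0
    rw [S.p_root h0] at hq
    exact hq h0
  exact S.mem_anc_iff.mpr ⟨⟨1, by omega, by rw [Function.iterate_one]⟩, hq⟩

theorem Setup.anc_closed {c q : S.Q} (hc : c ∈ S.anc q) :
    S.p c ∈ S.anc q ∨ S.D (S.p c) = 0 := by
  obtain ⟨⟨i, hi, hci⟩, hD⟩ := S.mem_anc_iff.mp hc
  by_cases h0 : S.D (S.p c) = 0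
  · right; exact h0
  · left
    refine S.mem_anc_iff.mpr ⟨⟨i + 1, ?_, ?_⟩, h0⟩
    · rcases S.D_iterate q i with h | h
      · rw [hci] at h; exact absurd h hD
      · rw [hci] at h; omega
    · rw [Function.iterate_succ_apply', hci]

noncomputable def Setup.Gset (z : S.Q × ZMod S.n) : Finset S.Q :=
  S.anc z.1 ∪ S.children z.1 ∪ S.children (S.p z.1)

theorem Setup.Gset_valid {z : S.Q × ZMod S.n} : ∀ c ∈ S.Gset z, S.D c ≠ 0 := by
  intro c hc
  rcases Finset.mem_union.mp hc with hc | hc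
  · rcases Finset.mem_union.mp hc with hc | hc
    · exact S.anc_valid hc
    · exact S.children_valid hc
  · exact S.children_valid hc

theorem Setup.Gset_closed {z : S.Q × ZMod S.n} :
    ∀ c ∈ S.Gset z, S.p c ∈ S.Gset z ∨ S.D (S.p c) = 0 := by
  intro c hc
  rcases Finset.mem_union.mp hc with hc' | hc'
  · rcases Finset.mem_union.mp hc' with hc'' | hc''
    · rcases S.anc_closed hc'' with h | h
      · exact Or.inl (Finset.mem_union.mpr (Or.inl (Finset.mem_union.mpr (Or.inl h))))
      · exact Or.inr h
    · have hpc : S.p c = z.1 := (S.mem_children_iff.mp hc'').1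
      by_cases h0 : S.D z.1 = 0
      · exact Or.inr (by rw [hpc]; exact h0)
      · refine Or.inl (Finset.mem_union.mpr (Or.inl (Finset.mem_union.mpr (Or.inl ?_))))
        rw [hpc]
        exact S.mem_anc_self h0
  · have hpc : S.p c = S.p z.1 := (S.mem_children_iff.mp hc').1
    by_cases h0 : S.D (S.p z.1) = 0
    · exact Or.inr (by rw [hpc]; exact h0)
    · refine Or.inl (Finset.mem_union.mpr (Or.inl (Finset.mem_union.mpr (Or.inl ?_))))
      rw [hpc]
      exact S.p_mem_anc h0

theorem Setup.sE_eq_sigma {E : Finset S.Q} {z : S.Q × ZMod S.n}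
    (hsub : S.Gset z ⊆ E) : S.sE E z = S.sigma z := by
  rw [S.sE_apply, S.sigma_apply]
  refine S.gsf_congr _ _ z ?_ ?_
  · refine Finset.inter_eq_left.mpr ?_
    intro c hc
    exact hsub (Finset.mem_union.mpr (Or.inl (Finset.mem_union.mpr (Or.inr hc))))
  · refine Finset.inter_eq_left.mpr ?_
    intro c hc
    exact hsub (Finset.mem_union.mpr (Or.inr hc))

theorem Setup.D_ne_zero_of_ne_root {c : S.Q} (h : c ≠ S.root) : S.D c ≠ 0 :=
  fun h0 => h (S.eq_one_of_D_eq_zero h0)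

theorem Setup.infiniteQ [Infinite H] : Infinite S.Q := by
  rw [← not_finite_iff_infinite]
  intro hF
  have h1 : (Subgroup.zpowers S.t : Set H).Finite := S.tfo.finite_zpowers
  haveI := h1.to_subtype
  haveI : Finite ((H ⧸ Subgroup.zpowers S.t) × (Subgroup.zpowers S.t)) := by
    exact Finite.instProd
  haveI : Finite H := Finite.of_equiv _ (Subgroup.groupEquivQuotientProdSubgroup (s := Subgroup.zpowers S.t)).symm
  exact not_finite H

theorem Setup.sigma_free [Infinite H] (z : S.Q × ZMod S.n) (m : ℕ) (hm : 0 < m) :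
    ((S.sigma) ^ m) z ≠ z := by
  intro hfix
  haveI := S.infiniteQ
  have hsinf : ({x : S.Q | x ≠ S.root}).Infinite := by
    have : {x : S.Q | x ≠ S.root} = Set.univ \ {S.root} := by
      ext x; simp
    rw [this]
    exact Set.infinite_univ.diff (Set.finite_singleton _)
  obtain ⟨F, hFsub, hFcard⟩ := hsinf.exists_subset_card_eq (m + 1)
  have hFne : ∀ c ∈ F, c ≠ S.root := fun c hc => hFsub hc
  classical
  set E := ((Finset.range m).biUnion fun i => S.Gset ((S.sigma ^ i) z)) ∪
    (F.biUnion fun c => S.anc c) with hEdef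
  have hGsub : ∀ i < m, S.Gset ((S.sigma ^ i) z) ⊆ E := by
    intro i hi c hc
    exact Finset.mem_union.mpr (Or.inl (Finset.mem_biUnion.mpr ⟨i, Finset.mem_range.mpr hi, hc⟩))
  have hval : ∀ c ∈ E, S.D c ≠ 0 := by
    intro c hc
    rcases Finset.mem_union.mp hc with hc | hc
    · obtain ⟨i, _, hci⟩ := Finset.mem_biUnion.mp hc
      exact S.Gset_valid c hci
    · obtain ⟨x, _, hcx⟩ := Finset.mem_biUnion.mp hc
      exact S.anc_valid hcx
  have hanc : ∀ c ∈ E, S.p c ∈ E ∨ S.D (S.p c) = 0 := by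
    intro c hc
    rcases Finset.mem_union.mp hc with hc | hc
    · obtain ⟨i, hi, hci⟩ := Finset.mem_biUnion.mp hc
      rcases S.Gset_closed c hci with h | h
      · exact Or.inl (Finset.mem_union.mpr (Or.inl (Finset.mem_biUnion.mpr ⟨i, hi, h⟩)))
      · exact Or.inr h
    · obtain ⟨x, hx, hcx⟩ := Finset.mem_biUnion.mp hc
      rcases S.anc_closed hcx with h | h
      · exact Or.inl (Finset.mem_union.mpr (Or.inr (Finset.mem_biUnion.mpr ⟨x, hx, h⟩)))
      · exact Or.inr h
  obtain ⟨_, I2⟩ := S.main E hval hanc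
  have hpows : ∀ i, i ≤ m → ((S.sE E) ^ i) z = ((S.sigma) ^ i) z := by
    intro i
    induction i with
    | zero => intro _; simp
    | succ i ih =>
      intro hi
      rw [pow_succ', pow_succ', Equiv.Perm.mul_apply, Equiv.Perm.mul_apply, ih (by omega)]
      exact S.sE_eq_sigma (hGsub i (by omega))
  have hτfix : ((S.sE E) ^ m) z = z := by rw [hpows m le_rfl]; exact hfix
  have hzcond : z.1 ∈ E ∨ S.D z.1 = 0 := by
    by_cases h0 : S.D z.1 = 0
    · exact Or.inr h0
    · left
      refine hGsub 0 hm ?_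
      have h00 : ((S.sigma) ^ 0) z = z := by simp
      rw [h00]
      exact Finset.mem_union.mpr (Or.inl (Finset.mem_union.mpr (Or.inl (S.mem_anc_self h0))))
  have key : ∀ c ∈ F, ∃ i, i < m ∧ ((S.sE E) ^ i) z = (c, (0 : ZMod S.n)) := by
    intro c hc
    have hcE : c ∈ E := by
      refine Finset.mem_union.mpr (Or.inr (Finset.mem_biUnion.mpr ⟨c, hc, ?_⟩))
      exact S.mem_anc_self (S.D_ne_zero_of_ne_root (hFne c hc))
    have hSC : (S.sE E).SameCycle z (c, (0:ZMod S.n)) :=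
      I2 z (c, (0:ZMod S.n)) hzcond (Or.inl hcE)
    exact samecycle_nat hm hτfix hSC
  have himg : F.image (fun c => ((c, (0:ZMod S.n)) : S.Q × ZMod S.n)) ⊆
      (Finset.range m).image (fun i => ((S.sE E) ^ i) z) := by
    intro x hx
    obtain ⟨c, hc, rfl⟩ := Finset.mem_image.mp hx
    obtain ⟨i, hi, hfixi⟩ := key c hc
    exact Finset.mem_image.mpr ⟨i, Finset.mem_range.mpr hi, hfixi⟩
  have hinj : Function.Injective (fun c : S.Q => ((c, (0:ZMod S.n)) : S.Q × ZMod S.n)) := by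
    intro a b hab
    exact congrArg Prod.fst hab
  have hcard1 : (F.image (fun c => ((c, (0:ZMod S.n)) : S.Q × ZMod S.n))).card = m + 1 := by
    rw [Finset.card_image_of_injective _ hinj, hFcard]
  have hcard2 : ((Finset.range m).image (fun i => ((S.sE E) ^ i) z)).card ≤ m := by
    calc ((Finset.range m).image (fun i => ((S.sE E) ^ i) z)).card ≤ (Finset.range m).card :=
      Finset.card_image_le
    _ = m := Finset.card_range m
  have := Finset.card_le_card himg
  omega

noncomputable def Setup.perm : Equiv.Perm H := S.co.permCongr S.sigma

theorem Setup.perm_apply (h : H) : S.perm h = S.co (S.sigma (S.co.symm h)) :=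
  Equiv.permCongr_apply _ _ _

theorem Setup.perm_pow (k : ℕ) : ∀ h : H, (S.perm ^ k) h = S.co ((S.sigma ^ k) (S.co.symm h)) := by
  induction k with
  | zero => intro h; simp
  | succ k ih =>
    intro h
    rw [pow_succ, Equiv.Perm.mul_apply, S.perm_apply h, pow_succ, Equiv.Perm.mul_apply]
    rw [ih (S.co (S.sigma (S.co.symm h))), Equiv.symm_apply_apply]

theorem Setup.perm_free [Infinite H] (h : H) (k : ℤ) (hk : (S.perm ^ k) h = h) : k = 0 := by
  by_contra hk0
  have key : ∀ (j : ℤ), 0 < j → (S.perm ^ j) h = h → False := by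
    intro j hj hfix
    have hj' : j = ((j.toNat : ℕ) : ℤ) := by omega
    rw [hj', zpow_natCast, S.perm_pow] at hfix
    have h2 : ((S.sigma ^ (j.toNat : ℕ))) (S.co.symm h) = S.co.symm h := by
      apply S.co.injective
      rw [hfix, Equiv.apply_symm_apply]
    exact S.sigma_free (S.co.symm h) j.toNat (by omega) h2
  rcases lt_trichotomy k 0 with hneg | hzero | hpos
  · have hfix : (S.perm ^ (-k)) h = h := by
      have : (S.perm ^ (-k)) ((S.perm ^ k) h) = h := by
        rw [← Equiv.Perm.mul_apply, ← zpow_add, neg_add_cancel, zpow_zero, Equiv.Perm.one_apply]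
      rw [hk] at this
      exact this
    exact key (-k) (by omega) hfix
  · exact hk0 hzero
  · exact key k hpos hk

noncomputable def Setup.U : Finset H :=
  S.T ∪ (Finset.range S.n).image (fun a => S.t ^ a) ∪
    ((Finset.range S.n).image (fun a => S.t ^ a)).image (fun x => x⁻¹)

theorem Setup.T_subset_U : S.T ⊆ S.U := fun x hx =>
  Finset.mem_union.mpr (Or.inl (Finset.mem_union.mpr (Or.inl hx)))

theorem Setup.one_mem_U : (1:H) ∈ S.U := S.T_subset_U S.one_mem

theorem Setup.tpow_mem_U {a : ℕ} (ha : a < S.n) : S.t ^ a ∈ S.U :=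
  Finset.mem_union.mpr (Or.inl (Finset.mem_union.mpr (Or.inr
    (Finset.mem_image.mpr ⟨a, Finset.mem_range.mpr ha, rfl⟩))))

theorem Setup.tpow_inv_mem_U {a : ℕ} (ha : a < S.n) : (S.t ^ a)⁻¹ ∈ S.U :=
  Finset.mem_union.mpr (Or.inr (Finset.mem_image.mpr
    ⟨S.t ^ a, Finset.mem_image.mpr ⟨a, Finset.mem_range.mpr ha, rfl⟩, rfl⟩))

theorem Setup.t_mem_U : S.t ∈ S.U := by
  have := S.tpow_mem_U (a := 1) (by have := S.two_le_n; omega)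
  rwa [pow_one] at this

theorem Setup.U_sym : ∀ x ∈ S.U, x⁻¹ ∈ S.U := by
  intro x hx
  rcases Finset.mem_union.mp hx with hx' | hx'
  · rcases Finset.mem_union.mp hx' with hx'' | hx''
    · exact S.T_subset_U (S.sym x hx'')
    · obtain ⟨a, ha, rfl⟩ := Finset.mem_image.mp hx''
      exact S.tpow_inv_mem_U (Finset.mem_range.mp ha)
  · obtain ⟨y, hy, rfl⟩ := Finset.mem_image.mp hx'
    obtain ⟨a, ha, rfl⟩ := Finset.mem_image.mp hy
    rw [inv_inv]
    exact S.tpow_mem_U (Finset.mem_range.mp ha)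

theorem one_mem_pow (T : Finset H) (h1 : (1:H) ∈ T) : ∀ k, (1:H) ∈ T ^ k := by
  intro k
  induction k with
  | zero => simp
  | succ k ih =>
    rw [pow_succ]
    have := Finset.mul_mem_mul ih h1
    rwa [mul_one] at this

theorem mem_pow_mono (T : Finset H) (h1 : (1:H) ∈ T) {k l : ℕ} (hkl : k ≤ l) {x : H}
    (hx : x ∈ T ^ k) : x ∈ T ^ l := by
  have haux : ∀ j : ℕ, x ∈ T ^ (k + j) := by
    intro j
    induction j with
    | zero => simpa using hx
    | succ j ih =>
      rw [← add_assoc, pow_succ]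
      have := Finset.mul_mem_mul ih h1
      rwa [mul_one] at this
  have := haux (l - k)
  rwa [Nat.add_sub_cancel' hkl] at this

theorem mul_mem_pow (T : Finset H) {a b : ℕ} {x y : H} (hx : x ∈ T ^ a) (hy : y ∈ T ^ b) :
    x * y ∈ T ^ (a + b) := by
  rw [pow_add]
  exact Finset.mul_mem_mul hx hy

theorem mem_pow_one (T : Finset H) {x : H} (hx : x ∈ T) : x ∈ T ^ 1 := by
  rwa [pow_one]

theorem pow_snoc {T : Finset H} {k : ℕ} {x y : H} (hx : x ∈ T ^ k) (hy : y ∈ T) :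
    x * y ∈ T ^ (k + 1) := by
  rw [pow_succ]
  exact Finset.mul_mem_mul hx hy

theorem Setup.out_rel {c : S.Q} (hc : S.D c ≠ 0) :
    ∃ a b s, a < S.n ∧ b < S.n ∧ s ∈ S.T ∧
      Quotient.out c = Quotient.out (S.p c) * S.t ^ a * s * (S.t ^ b)⁻¹ := by
  obtain ⟨g, s, hs, hg, hgs⟩ := S.p_adj hc
  obtain ⟨a, ha, hga⟩ := S.coset_decomp hg
  obtain ⟨b, hb, hgsb⟩ := S.coset_decomp hgs
  refine ⟨a, b, s, ha, hb, hs, ?_⟩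
  rw [← hga, hgsb]
  group

theorem Setup.disp_child {q c : S.Q} (hpc : S.p c = q) (hDc : S.D c ≠ 0) (i j : ZMod S.n) :
    (S.co (q, i))⁻¹ * S.co (c, j) ∈ S.U ^ 8 := by
  obtain ⟨a, b, s, ha, hb, hs, hrel⟩ := S.out_rel hDc
  rw [hpc] at hrel
  have hX : (S.co (q, i))⁻¹ * S.co (c, j) =
      (S.t ^ i.val)⁻¹ * (S.t ^ a) * s * (S.t ^ b)⁻¹ * (S.t ^ j.val) := by
    rw [S.co_apply, S.co_apply, hrel]
    group
  rw [hX]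
  haveI := S.NeZeroN
  have h5 : (S.t ^ i.val)⁻¹ * (S.t ^ a) * s * (S.t ^ b)⁻¹ * (S.t ^ j.val) ∈ S.U ^ 5 :=
    pow_snoc (pow_snoc (pow_snoc (pow_snoc (mem_pow_one _ (S.tpow_inv_mem_U (ZMod.val_lt i)))
      (S.tpow_mem_U ha)) (S.T_subset_U hs)) (S.tpow_inv_mem_U hb)) (S.tpow_mem_U (ZMod.val_lt j))
  exact mem_pow_mono _ S.one_mem_U (by omega) h5

theorem Setup.disp_par {q : S.Q} (hDq : S.D q ≠ 0) (i j : ZMod S.n) :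
    (S.co (q, i))⁻¹ * S.co (S.p q, j) ∈ S.U ^ 8 := by
  obtain ⟨a, b, s, ha, hb, hs, hrel⟩ := S.out_rel hDq
  have hX : (S.co (q, i))⁻¹ * S.co (S.p q, j) =
      (S.t ^ i.val)⁻¹ * (S.t ^ b) * s⁻¹ * (S.t ^ a)⁻¹ * (S.t ^ j.val) := by
    rw [S.co_apply, S.co_apply, hrel]
    group
  rw [hX]
  haveI := S.NeZeroN
  have h5 : (S.t ^ i.val)⁻¹ * (S.t ^ b) * s⁻¹ * (S.t ^ a)⁻¹ * (S.t ^ j.val) ∈ S.U ^ 5 :=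
    pow_snoc (pow_snoc (pow_snoc (pow_snoc (mem_pow_one _ (S.tpow_inv_mem_U (ZMod.val_lt i)))
      (S.tpow_mem_U hb)) (S.U_sym s (S.T_subset_U hs))) (S.tpow_inv_mem_U ha))
      (S.tpow_mem_U (ZMod.val_lt j))
  exact mem_pow_mono _ S.one_mem_U (by omega) h5

theorem Setup.disp_sib {q c : S.Q} (hpc : S.p c = S.p q) (hDc : S.D c ≠ 0) (hDq : S.D q ≠ 0)
    (i j : ZMod S.n) : (S.co (q, i))⁻¹ * S.co (c, j) ∈ S.U ^ 8 := by
  obtain ⟨a, b, s, ha, hb, hs, hrel⟩ := S.out_rel hDq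
  obtain ⟨a', b', s', ha', hb', hs', hrel'⟩ := S.out_rel hDc
  rw [hpc] at hrel'
  have hX : (S.co (q, i))⁻¹ * S.co (c, j) =
      (S.t ^ i.val)⁻¹ * (S.t ^ b) * s⁻¹ * (S.t ^ a)⁻¹ *
        (S.t ^ a') * s' * (S.t ^ b')⁻¹ * (S.t ^ j.val) := by
    rw [S.co_apply, S.co_apply, hrel, hrel']
    group
  rw [hX]
  haveI := S.NeZeroN
  exact pow_snoc (pow_snoc (pow_snoc (pow_snoc (pow_snoc (pow_snoc (pow_snoc
    (mem_pow_one _ (S.tpow_inv_mem_U (ZMod.val_lt i)))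
    (S.tpow_mem_U hb)) (S.U_sym s (S.T_subset_U hs))) (S.tpow_inv_mem_U ha))
    (S.tpow_mem_U ha')) (S.T_subset_U hs')) (S.tpow_inv_mem_U hb'))
    (S.tpow_mem_U (ZMod.val_lt j))

theorem Setup.sigma_cases (z : S.Q × ZMod S.n) :
    (∃ c, c ∈ S.children z.1 ∧ S.sigma z = (c, 2)) ∨
    (∃ c, S.p c = S.p z.1 ∧ S.D c ≠ 0 ∧ S.sigma z = (c, 2)) ∨
    (S.D z.1 ≠ 0 ∧ S.sigma z = (S.p z.1, 1)) ∨
    S.sigma z = (z.1, z.2 + 1) := by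
  rw [S.sigma_apply, Setup.gsf]
  split_ifs with h1 h2 h3
  · exact Or.inl ⟨_, Finset.max'_mem _ _, rfl⟩
  · refine Or.inr (Or.inl ⟨_, ?_, ?_, rfl⟩)
    · have hm := Finset.max'_mem _ h3
      exact (S.mem_children_iff.mp (Finset.mem_filter.mp hm).1).1
    · have hm := Finset.max'_mem _ h3
      exact (S.mem_children_iff.mp (Finset.mem_filter.mp hm).1).2
  · refine Or.inr (Or.inr (Or.inl ⟨?_, rfl⟩))
    exact (S.mem_children_iff.mp h2.2).2
  · exact Or.inr (Or.inr (Or.inr rfl))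

theorem Setup.disp (z : S.Q × ZMod S.n) : (S.co z)⁻¹ * S.co (S.sigma z) ∈ S.U ^ 8 := by
  have hz : z = (z.1, z.2) := rfl
  rcases S.sigma_cases z with ⟨c, hc, hs⟩ | ⟨c, hpc, hDc, hs⟩ | ⟨hD, hs⟩ | hs
  · rw [hs, hz]
    exact S.disp_child (S.mem_children_iff.mp hc).1 (S.mem_children_iff.mp hc).2 z.2 2
  · rw [hs, hz]
    by_cases hq0 : S.D z.1 = 0
    · -- then p z.1 = z.1, so p c = z.1, a child case
      have : S.p c = z.1 := by rw [hpc, S.p_root hq0]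
      exact S.disp_child this hDc z.2 2
    · exact S.disp_sib hpc hDc hq0 z.2 2
  · rw [hs, hz]
    exact S.disp_par hD z.2 1
  · rw [hs, hz]
    have hco : S.co (z.1, z.2 + 1) = S.co (z.1, z.2) * S.t := S.co_succ z.1 z.2
    rw [hco]
    have hX : (S.co (z.1, z.2))⁻¹ * (S.co (z.1, z.2) * S.t) = S.t := by group
    rw [hX]
    exact mem_pow_mono _ S.one_mem_U (by omega) (mem_pow_one _ S.t_mem_U)

theorem Setup.perm_disp (h : H) : h⁻¹ * S.perm h ∈ S.U ^ 8 := by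
  have h1 : h = S.co (S.co.symm h) := (Equiv.apply_symm_apply _ _).symm
  rw [S.perm_apply h]
  nth_rewrite 1 [h1]
  exact S.disp (S.co.symm h)

theorem Setup.perm_symm_disp (h : H) : h⁻¹ * S.perm.symm h ∈ S.U ^ 8 := by
  have h1 : S.perm (S.perm.symm h) = h := Equiv.apply_symm_apply _ _
  have h2 : (S.perm.symm h)⁻¹ * S.perm (S.perm.symm h) ∈ S.U ^ 8 := S.perm_disp _
  have h3 : h⁻¹ * S.perm.symm h = ((S.perm.symm h)⁻¹ * S.perm (S.perm.symm h))⁻¹ := by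
    rw [h1]
    group
  rw [h3]
  exact inv_mem_pow _ S.U_sym 8 _ h2

theorem Setup.closure_U8 : Subgroup.closure ((S.U ^ 8 : Finset H) : Set H) = ⊤ := by
  rw [eq_top_iff, ← S.gen]
  apply Subgroup.closure_mono
  intro x hx
  exact mem_pow_mono _ S.one_mem_U (by omega) (mem_pow_one _ (S.T_subset_U hx))

include S in
theorem Setup.torsion_final [Infinite H] :
    ∃ (Sf : Finset H) (ω : H → ↥Sf × ↥Sf),
      (∀ x ∈ Sf, x⁻¹ ∈ Sf) ∧ (1 : H) ∈ Sf ∧ Subgroup.closure (Sf : Set H) = ⊤ ∧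
      (∀ h : H, ((ω (h * ((ω h).2 : H))).1 : H) = (((ω h).2 : H))⁻¹) ∧
      (∀ h : H, ((ω (h * ((ω h).1 : H))).2 : H) = (((ω h).1 : H))⁻¹) ∧
      ∃ e : Equiv.Perm H, (∀ h : H, e h = h * ((ω h).2 : H)) ∧
        ∀ (h : H) (n : ℤ), (e ^ n) h = h → n = 0 := by
  refine ⟨S.U ^ 8, fun h => (⟨h⁻¹ * S.perm.symm h, S.perm_symm_disp h⟩,
    ⟨h⁻¹ * S.perm h, S.perm_disp h⟩), fun x => inv_mem_pow _ S.U_sym 8 x,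
    one_mem_pow _ S.one_mem_U 8, S.closure_U8, ?_, ?_, S.perm, ?_, ?_⟩
  · intro h
    simp only
    have h1 : h * (h⁻¹ * S.perm h) = S.perm h := by group
    rw [h1]
    have h2 : S.perm.symm (S.perm h) = h := Equiv.symm_apply_apply _ _
    rw [h2]
    group
  · intro h
    simp only
    have h1 : h * (h⁻¹ * S.perm.symm h) = S.perm.symm h := by group
    rw [h1]
    have h2 : S.perm (S.perm.symm h) = h := Equiv.apply_symm_apply _ _
    rw [h2]
    group
  · intro h
    simp only
    group
  · exact S.perm_free

theorem mulRight_zpow (t : H) : ∀ (k : ℤ) (h : H), ((Equiv.mulRight t) ^ k) h = h * t ^ k := by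
  intro k
  induction k using Int.induction_on with
  | zero => intro h; simp
  | succ i ih =>
    intro h
    rw [zpow_add_one, Equiv.Perm.mul_apply]
    have h1 : (Equiv.mulRight t) h = h * t := rfl
    rw [h1, ih (h * t), zpow_add_one, mul_assoc]
    congr 1
    exact ((Commute.refl t).zpow_right (i : ℤ)).eq
  | pred i ih =>
    intro h
    rw [zpow_sub_one, Equiv.Perm.mul_apply]
    have h1 : ((Equiv.mulRight t)⁻¹) h = h * t⁻¹ := rfl
    rw [h1, ih (h * t⁻¹), zpow_sub_one, mul_assoc]
    congr 1
    exact ((Commute.refl t).inv_left.zpow_right (-(i : ℤ))).eq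

end Stmt8Prop35

/-- **Proposition 3.5** (`proposition_ofseward`). Every infinite, finitely generated
group `H` admits a finite symmetric generating set `S ∋ 1` and a configuration
`ω : H → S × S` whose left/right labels are compatible (so that `R h = h * right h`
and `L h = h * left h` are mutually inverse bijections of `H`) and whose induced
`ℤ`-action `n ↦ Rⁿ` is free. -/
theorem stmt8 {H : Type} [Group H] [Infinite H] (hfg : Group.FG H) :
    ∃ (S : Finset H) (ω : H → ↥S × ↥S),
      -- S is symmetric, contains 1 and generates H
      (∀ x ∈ S, x⁻¹ ∈ S) ∧ (1 : H) ∈ S ∧ Subgroup.closure (S : Set H) = ⊤ ∧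
      -- (a) compatibility of the left and right labels
      (∀ h : H, ((ω (h * ((ω h).2 : H))).1 : H) = (((ω h).2 : H))⁻¹) ∧
      (∀ h : H, ((ω (h * ((ω h).1 : H))).2 : H) = (((ω h).1 : H))⁻¹) ∧
      -- (b) R is a bijection (an element of `Equiv.Perm H`) whose ℤ-action is free
      ∃ e : Equiv.Perm H, (∀ h : H, e h = h * ((ω h).2 : H)) ∧
        ∀ (h : H) (n : ℤ), (e ^ n) h = h → n = 0 := by
  classical
  obtain ⟨T0, hT0⟩ : ∃ T : Finset H, Subgroup.closure (T : Set H) = ⊤ := by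
    obtain ⟨s, hs, hfin⟩ := Group.fg_iff.mp hfg
    exact ⟨hfin.toFinset, by rwa [Set.Finite.coe_toFinset]⟩
  set T : Finset H := T0 ∪ T0.image (fun x => x⁻¹) ∪ {1} with hT
  have h1T : (1:H) ∈ T := Finset.mem_union.mpr (Or.inr (Finset.mem_singleton_self 1))
  have hsymT : ∀ x ∈ T, x⁻¹ ∈ T := by
    intro x hx
    rcases Finset.mem_union.mp hx with hx' | hx'
    · rcases Finset.mem_union.mp hx' with hx'' | hx''
      · exact Finset.mem_union.mpr (Or.inl (Finset.mem_union.mpr (Or.inr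
          (Finset.mem_image.mpr ⟨x, hx'', rfl⟩))))
      · obtain ⟨y, hy, rfl⟩ := Finset.mem_image.mp hx''
        rw [inv_inv]
        exact Finset.mem_union.mpr (Or.inl (Finset.mem_union.mpr (Or.inl hy)))
    · rw [Finset.mem_singleton.mp hx']
      simpa using h1T
  have hgenT : Subgroup.closure (T : Set H) = ⊤ := by
    rw [eq_top_iff, ← hT0]
    apply Subgroup.closure_mono
    intro x hx
    exact Finset.mem_union.mpr (Or.inl (Finset.mem_union.mpr (Or.inl hx)))
  obtain ⟨t, ht⟩ := exists_ne (1 : H)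
  by_cases hord : orderOf t = 0
  · -- `t` has infinite order: use constant labels
    refine ⟨T ∪ {t, t⁻¹}, fun h => (⟨t⁻¹, ?_⟩, ⟨t, ?_⟩), ?_, ?_, ?_, ?_, ?_,
      Equiv.mulRight t, ?_, ?_⟩
    · exact Finset.mem_union.mpr (Or.inr (by simp))
    · exact Finset.mem_union.mpr (Or.inr (by simp))
    · intro x hx
      rcases Finset.mem_union.mp hx with hx' | hx'
      · exact Finset.mem_union.mpr (Or.inl (hsymT x hx'))
      · rcases Finset.mem_insert.mp hx' with rfl | hx''
        · exact Finset.mem_union.mpr (Or.inr (by simp))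
        · rw [Finset.mem_singleton.mp hx'', inv_inv]
          exact Finset.mem_union.mpr (Or.inr (by simp))
    · exact Finset.mem_union.mpr (Or.inl h1T)
    · rw [eq_top_iff, ← hgenT]
      apply Subgroup.closure_mono
      intro x hx
      exact Finset.mem_union.mpr (Or.inl hx)
    · intro h; rfl
    · intro h
      simp only
      rw [inv_inv]
    · intro h; rfl
    · intro h n hn
      rw [Stmt8Prop35.mulRight_zpow t n h] at hn
      have htn : t ^ n = 1 := by
        have := hn
        calc t ^ n = h⁻¹ * (h * t ^ n) := by group
        _ = h⁻¹ * h := by rw [this]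
        _ = 1 := by group
      have hdvd : ((orderOf t : ℤ)) ∣ n := orderOf_dvd_iff_zpow_eq_one.mpr htn
      rw [hord] at hdvd
      exact_mod_cast zero_dvd_iff.mp (by exact_mod_cast hdvd)
  · -- `t` has finite order: run the coset-tree construction
    haveI : Countable H := Stmt8Prop35.countable_of_gen T h1T hsymT hgenT
    haveI : Countable (H ⧸ Subgroup.zpowers t) :=
      inferInstanceAs (Countable (Quotient (QuotientGroup.leftRel (Subgroup.zpowers t))))
    obtain ⟨f, hf⟩ := Countable.exists_injective_nat (H ⧸ Subgroup.zpowers t)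
    exact (Stmt8Prop35.Setup.torsion_final ⟨T, t, h1T, hsymT, hgenT, ht, hord, f, hf⟩)
end

section
/- Let H₁ and H₂ be groups with finite symmetric generating sets S₁ ∋ 1_{H₁} and S₂ ∋ 1_{H₂}. For i ∈ {1,2}, let ω_i : H_i → S_i × S_i, with components (left_i, right_i), satisfy left_i(h · right_i(h)) = right_i(h)⁻¹ and right_i(h · left_i(h)) = left_i(h)⁻¹ for all h ∈ H_i, so that R_i(h) := h · right_i(h) is a bijection of H_i, and assume each induced ℤ-action is free (R_iⁿ(h) = h implies n = 0). Let A be a finite alphabet, Y ⊆ A^{ℤ²} a ℤ²-subshift, and c ∈ Y. Then there exists y : H₁ × H₂ → A such that for every (h₁,h₂) ∈ H₁ × H₂ the configuration ℤ² → A given by (z₁,z₂) ↦ y(R₁^{z₁}(h₁), R₂^{z₂}(h₂)) belongs to the shift-orbit of c, and for (h₁,h₂) = (1_{H₁},1_{H₂}) this configuration equals c. -/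
/-- The shift action of `ℤ²` on configurations: `(shift2 z x) w = x (w - z)`. -/
def shift2 {A : Type} (z : ℤ × ℤ) (x : ℤ × ℤ → A) : ℤ × ℤ → A :=
  fun w => x (w - z)

/-- A `ℤ²`-subshift of finite type: the set of configurations avoiding a finite set
of forbidden patterns. -/
def IsSFT2 {A : Type} (X : Set (ℤ × ℤ → A)) : Prop :=
  ∃ (n : ℕ) (F : Fin n → Finset (ℤ × ℤ)) (p : (i : Fin n) → (F i → A)),
    X = {x | ∀ (i : Fin n) (z : ℤ × ℤ), ¬ ∀ h : F i, x (z + h) = p i h}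

/-- A sofic `ℤ²`-subshift: the image of a `ℤ²`-SFT under a continuous
shift-equivariant map. -/
def IsSofic2 {A : Type} [TopologicalSpace A] (Y : Set (ℤ × ℤ → A)) : Prop :=
  ∃ (m : ℕ) (X : Set (ℤ × ℤ → Fin m)) (φ : (ℤ × ℤ → Fin m) → (ℤ × ℤ → A)),
    IsSFT2 X ∧ Continuous φ ∧
    (∀ (z : ℤ × ℤ) (x : ℤ × ℤ → Fin m), φ (shift2 z x) = shift2 z (φ x)) ∧ φ '' X = Y

/-- **Proposition 3.7** (`propo_relacion`). Given groups `H₁, H₂` with finite symmetric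
generating sets `S₁ ∋ 1`, `S₂ ∋ 1`, grid configurations `ωᵢ : Hᵢ → Sᵢ × Sᵢ` with
compatible labels inducing free `ℤ`-actions `Rᵢ` (packaged as permutations `eᵢ`), a
`ℤ²`-subshift `Y ⊆ A^{ℤ²}` and `c ∈ Y`, there is `y : H₁ × H₂ → A` such that reading
`y` along every simulated grid yields an element of the shift-orbit of `c`, the grid
based at the identity yielding `c` itself. -/
theorem stmt9 {H₁ H₂ : Type} [Group H₁] [Group H₂]
    (S₁ : Finset H₁) (S₂ : Finset H₂)
    (hone₁ : (1 : H₁) ∈ S₁) (hone₂ : (1 : H₂) ∈ S₂)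
    (hsym₁ : ∀ x ∈ S₁, x⁻¹ ∈ S₁) (hsym₂ : ∀ x ∈ S₂, x⁻¹ ∈ S₂)
    (hgen₁ : Subgroup.closure (S₁ : Set H₁) = ⊤)
    (hgen₂ : Subgroup.closure (S₂ : Set H₂) = ⊤)
    (ω₁ : H₁ → ↥S₁ × ↥S₁) (ω₂ : H₂ → ↥S₂ × ↥S₂)
    (hcomp₁ : ∀ h : H₁, ((ω₁ (h * ((ω₁ h).2 : H₁))).1 : H₁) = (((ω₁ h).2 : H₁))⁻¹)
    (hcomp₁' : ∀ h : H₁, ((ω₁ (h * ((ω₁ h).1 : H₁))).2 : H₁) = (((ω₁ h).1 : H₁))⁻¹)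
    (hcomp₂ : ∀ h : H₂, ((ω₂ (h * ((ω₂ h).2 : H₂))).1 : H₂) = (((ω₂ h).2 : H₂))⁻¹)
    (hcomp₂' : ∀ h : H₂, ((ω₂ (h * ((ω₂ h).1 : H₂))).2 : H₂) = (((ω₂ h).1 : H₂))⁻¹)
    (e₁ : Equiv.Perm H₁) (he₁ : ∀ h : H₁, e₁ h = h * ((ω₁ h).2 : H₁))
    (e₂ : Equiv.Perm H₂) (he₂ : ∀ h : H₂, e₂ h = h * ((ω₂ h).2 : H₂))
    (hfree₁ : ∀ (h : H₁) (n : ℤ), (e₁ ^ n) h = h → n = 0)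
    (hfree₂ : ∀ (h : H₂) (n : ℤ), (e₂ ^ n) h = h → n = 0)
    {A : Type} [Fintype A] [TopologicalSpace A] [DiscreteTopology A]
    (Y : Set (ℤ × ℤ → A)) (hYclosed : IsClosed Y)
    (hYinv : ∀ z : ℤ × ℤ, shift2 z '' Y ⊆ Y)
    (c : ℤ × ℤ → A) (hc : c ∈ Y) :
    ∃ y : H₁ × H₂ → A,
      (∀ (h₁ : H₁) (h₂ : H₂), ∃ z : ℤ × ℤ,
        (fun w : ℤ × ℤ => y ((e₁ ^ w.1) h₁, (e₂ ^ w.2) h₂)) = shift2 z c) ∧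
      (fun w : ℤ × ℤ => y ((e₁ ^ w.1) 1, (e₂ ^ w.2) 1)) = c := by
  classical
  set act : ℤ × ℤ → H₁ × H₂ → H₁ × H₂ :=
    fun z g => ((e₁ ^ z.1) g.1, (e₂ ^ z.2) g.2) with hact
  have hzero : ∀ g, act 0 g = g := by
    intro g; simp [hact]
  have hadd : ∀ z w g, act (z + w) g = act z (act w g) := by
    intro z w g
    simp [hact, zpow_add, Equiv.Perm.mul_apply]
  have hfr : ∀ z g, act z g = g → z = 0 := by
    intro z g h
    rw [hact, Prod.ext_iff] at h
    exact Prod.ext (hfree₁ _ _ h.1) (hfree₂ _ _ h.2)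
  -- the orbit equivalence relation
  let s : Setoid (H₁ × H₂) :=
    ⟨fun g g' => ∃ z, act z g = g', by
      constructor
      · intro g; exact ⟨0, hzero g⟩
      · rintro g g' ⟨z, hz⟩
        refine ⟨-z, ?_⟩
        rw [← hz, ← hadd, neg_add_cancel, hzero]
      · rintro g g' g'' ⟨z, hz⟩ ⟨w, hw⟩
        exact ⟨w + z, by rw [hadd, hz, hw]⟩⟩
  -- the representative of each orbit, chosen to be 1 on the orbit of 1
  set rep : H₁ × H₂ → H₁ × H₂ :=
    fun g => if ∃ z, act z 1 = g then 1 else (Quotient.mk s g).out with hrepdef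
  have hrep : ∀ g, ∃ z, act z (rep g) = g := by
    intro g
    rw [hrepdef]
    by_cases h : ∃ z, act z 1 = g
    · simp only [if_pos h]; exact h
    · simp only [h, if_false]
      exact Quotient.mk_out (s := s) g
  have hrep_inv : ∀ w g, rep (act w g) = rep g := by
    intro w g
    have horb : ∀ g g' : H₁ × H₂, (∃ z, act z g = g') →
        ((∃ z, act z 1 = g) ↔ (∃ z, act z 1 = g')) := by
      rintro g g' ⟨z, hz⟩
      constructor
      · rintro ⟨u, hu⟩; exact ⟨z + u, by rw [hadd, hu, hz]⟩
      · rintro ⟨u, hu⟩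
        exact ⟨-z + u, by rw [hadd, hu, ← hz, ← hadd, neg_add_cancel, hzero]⟩
    have h1 : (∃ z, act z 1 = act w g) ↔ (∃ z, act z 1 = g) :=
      (horb g (act w g) ⟨w, rfl⟩).symm
    have h2 : Quotient.mk s (act w g) = Quotient.mk s g :=
      Quotient.sound (⟨-w, by rw [← hadd, neg_add_cancel, hzero]⟩ : s.r (act w g) g)
    rw [hrepdef]
    simp only [h1, h2]
  -- the coordinate map
  set θ : H₁ × H₂ → ℤ × ℤ := fun g => Classical.choose (hrep g) with hθdef
  have hθ : ∀ g, act (θ g) (rep g) = g := fun g => Classical.choose_spec (hrep g)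
  have huniq : ∀ z w (g : H₁ × H₂), act z g = act w g → z = w := by
    intro z w g h
    have : act (-w + z) g = g := by
      rw [hadd, h, ← hadd, neg_add_cancel, hzero]
    exact (neg_add_eq_zero.mp (hfr _ _ this)).symm
  have hθ_shift : ∀ w g, θ (act w g) = w + θ g := by
    intro w g
    apply huniq _ _ (rep g)
    rw [hadd]
    rw [hθ g]
    have := hθ (act w g)
    rw [hrep_inv w g] at this
    exact this
  have hθ_one : θ 1 = 0 := by
    have h1 : rep (1 : H₁ × H₂) = 1 := by
      have hx : ∃ z, act z 1 = (1 : H₁ × H₂) := ⟨0, hzero 1⟩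
      rw [hrepdef]; simp only [if_pos hx]
    have := hθ (1 : H₁ × H₂)
    rw [h1] at this
    exact hfr _ _ this
  refine ⟨fun g => c (θ g), ?_, ?_⟩
  · intro h₁ h₂
    refine ⟨-θ (h₁, h₂), ?_⟩
    funext w
    have : ((e₁ ^ w.1) h₁, (e₂ ^ w.2) h₂) = act w (h₁, h₂) := rfl
    simp only [this, hθ_shift, shift2, sub_neg_eq_add]
  · funext w
    have h1 : ((e₁ ^ w.1) (1 : H₁), (e₂ ^ w.2) (1 : H₂)) = act w 1 := rfl
    simp only [h1, hθ_shift, hθ_one, add_zero]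
end

section
/- Define Ψ : {0,1}^ℕ → {0,1,□}^ℤ by Ψ(x)(j) = x_n if j ≡ 3ⁿ (mod 3^{n+1}) for some n ∈ ℕ, and Ψ(x)(j) = □ otherwise. Then: (0) for each j ∈ ℤ there is at most one n ∈ ℕ with j ≡ 3ⁿ (mod 3^{n+1}), so Ψ is well defined; and for every x ∈ {0,1}^ℕ and every j ∈ ℤ: (1) Ψ(x)(3j) = Ψ(σ(x))(j), where σ(x) is the one-sided shift σ(x)_i = x_{i+1}; (2) Ψ(x)(3j+1) = x_0; (3) Ψ(x)(3j+2) = □. -/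
open Classical

/-- The Toeplitz-like encoding `Ψ : {0,1}^ℕ → {0,1,□}^ℤ` (with `□ = none`):
`Ψ(x)(j) = x n` if `j ≡ 3ⁿ (mod 3^(n+1))` for (the necessarily unique) `n`, and
`Ψ(x)(j) = □` otherwise. -/
noncomputable def Psi (x : ℕ → Bool) (j : ℤ) : Option Bool :=
  if h : ∃ n : ℕ, j ≡ 3 ^ n [ZMOD 3 ^ (n + 1)] then some (x h.choose) else none

lemma psi_uniq_aux {j : ℤ} {n n' : ℕ} (hlt : n < n')
    (h : j ≡ 3 ^ n [ZMOD 3 ^ (n + 1)]) (h' : j ≡ 3 ^ n' [ZMOD 3 ^ (n' + 1)]) : False := by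
  have hd : (3:ℤ) ^ (n+1) ∣ 3 ^ (n'+1) := pow_dvd_pow 3 (by omega)
  have h2 : j ≡ 3 ^ n' [ZMOD 3 ^ (n + 1)] := h'.of_dvd hd
  have h3 : (3:ℤ) ^ n ≡ 3 ^ n' [ZMOD 3 ^ (n + 1)] := h.symm.trans h2
  have h4 : (3:ℤ) ^ (n+1) ∣ 3 ^ n' - 3 ^ n := Int.ModEq.dvd h3
  have h5 : (3:ℤ) ^ (n+1) ∣ 3 ^ n' := pow_dvd_pow 3 (by omega)
  have h6 : (3:ℤ) ^ (n+1) ∣ 3 ^ n := by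
    have := dvd_sub h5 h4
    simpa using this
  have := Int.le_of_dvd (by positivity) h6
  have : (3:ℤ) ^ (n+1) ≤ 3 ^ n := this
  have hlt2 : (3:ℤ) ^ n < 3 ^ (n+1) := by
    apply pow_lt_pow_right₀ (by norm_num) (by omega)
  omega

lemma psi_uniq {j : ℤ} {n n' : ℕ}
    (h : j ≡ 3 ^ n [ZMOD 3 ^ (n + 1)]) (h' : j ≡ 3 ^ n' [ZMOD 3 ^ (n' + 1)]) : n = n' := by
  rcases lt_trichotomy n n' with hl | he | hl
  · exact absurd (psi_uniq_aux hl h h') (by simp)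
  · exact he
  · exact absurd (psi_uniq_aux hl h' h) (by simp)

lemma psi_spec_some (x : ℕ → Bool) (j : ℤ) (n : ℕ)
    (h : j ≡ 3 ^ n [ZMOD 3 ^ (n + 1)]) : Psi x j = some (x n) := by
  have hex : ∃ m : ℕ, j ≡ 3 ^ m [ZMOD 3 ^ (m + 1)] := ⟨n, h⟩
  rw [Psi, dif_pos hex]
  exact congrArg (fun m => some (x m)) (psi_uniq hex.choose_spec h)

lemma psi_spec_none (x : ℕ → Bool) (j : ℤ)
    (h : ¬ ∃ n : ℕ, j ≡ 3 ^ n [ZMOD 3 ^ (n + 1)]) : Psi x j = none := by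
  rw [Psi, dif_neg h]

lemma mod3_of_mem {j : ℤ} {n : ℕ} (h : j ≡ 3 ^ n [ZMOD 3 ^ (n + 1)]) :
    j ≡ 3 ^ n [ZMOD 3] := h.of_dvd (dvd_pow_self 3 (Nat.succ_ne_zero n))

/-- Basic properties of the encoding `Ψ`: (0) for each `j ∈ ℤ` there is at most one
`n` with `j ≡ 3ⁿ (mod 3^(n+1))`, so `Ψ` is well defined and satisfies its defining
specification; moreover for all `x` and `j`: (1) `Ψ(x)(3j) = Ψ(σ(x))(j)` where `σ` is
the one-sided shift; (2) `Ψ(x)(3j+1) = x 0`; (3) `Ψ(x)(3j+2) = □`. -/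
theorem stmt14 :
    (∀ (j : ℤ) (n n' : ℕ),
      j ≡ 3 ^ n [ZMOD 3 ^ (n + 1)] → j ≡ 3 ^ n' [ZMOD 3 ^ (n' + 1)] → n = n') ∧
    (∀ (x : ℕ → Bool) (j : ℤ) (n : ℕ),
      j ≡ 3 ^ n [ZMOD 3 ^ (n + 1)] → Psi x j = some (x n)) ∧
    (∀ (x : ℕ → Bool) (j : ℤ),
      (¬ ∃ n : ℕ, j ≡ 3 ^ n [ZMOD 3 ^ (n + 1)]) → Psi x j = none) ∧
    (∀ (x : ℕ → Bool) (j : ℤ),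
      Psi x (3 * j) = Psi (fun i => x (i + 1)) j ∧
      Psi x (3 * j + 1) = some (x 0) ∧
      Psi x (3 * j + 2) = none) := by
  refine ⟨fun j n n' h h' => psi_uniq h h', psi_spec_some, psi_spec_none, fun x j => ?_⟩
  refine ⟨?_, ?_, ?_⟩
  · -- Psi x (3*j) = Psi σx j
    by_cases hj : ∃ m : ℕ, j ≡ 3 ^ m [ZMOD 3 ^ (m + 1)]
    · obtain ⟨m, hm⟩ := hj
      have hd : (3:ℤ) ^ (m+1) ∣ 3 ^ m - j := Int.ModEq.dvd hm
      have h3j : (3 * j) ≡ 3 ^ (m + 1) [ZMOD 3 ^ (m + 1 + 1)] := by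
        refine (Int.modEq_iff_dvd.mpr ?_).symm.symm
        have : (3:ℤ) * 3 ^ (m+1) ∣ 3 * (3 ^ m - j) := mul_dvd_mul_left 3 hd
        have e1 : (3:ℤ) * 3 ^ (m+1) = 3 ^ (m+1+1) := by ring
        have e2 : (3:ℤ) * (3 ^ m - j) = 3 ^ (m+1) - 3 * j := by ring
        rwa [e1, e2] at this
      rw [psi_spec_some x (3*j) (m+1) h3j, psi_spec_some _ j m hm]
    · rw [psi_spec_none _ j hj]
      apply psi_spec_none
      rintro ⟨n, hn⟩
      rcases n with _ | m
      · -- 3j ≡ 1 mod 3 : impossible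
        have h3 := mod3_of_mem hn
        have hd : (3:ℤ) ∣ 3 ^ 0 - 3 * j := Int.ModEq.dvd h3
        have hd' : (3:ℤ) ∣ 1 - 3 * j := by simpa using hd
        omega
      · apply hj
        refine ⟨m, ?_⟩
        have hd : (3:ℤ) ^ (m + 1 + 1) ∣ 3 ^ (m+1) - 3 * j := Int.ModEq.dvd hn
        have hd2 : (3:ℤ) * 3 ^ (m + 1) ∣ 3 * (3 ^ m - j) := by
          have e1 : (3:ℤ) * 3 ^ (m+1) = 3 ^ (m+1+1) := by ring
          have e2 : (3:ℤ) * (3 ^ m - j) = 3 ^ (m+1) - 3 * j := by ring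
          rw [e1, e2]; exact hd
        have : (3:ℤ) ^ (m + 1) ∣ 3 ^ m - j :=
          (mul_dvd_mul_iff_left (by norm_num : (3:ℤ) ≠ 0)).mp hd2
        exact (Int.modEq_iff_dvd.mpr this).symm.symm
  · -- Psi x (3*j+1) = some (x 0)
    apply psi_spec_some
    have : (3:ℤ) ∣ (3 * j + 1) - 3 ^ 0 - 0 := by ring_nf; exact ⟨j, by ring⟩
    show (3 * j + 1) % (3:ℤ) ^ (0+1) = 3 ^ 0 % 3 ^ (0+1)
    omega
  · -- Psi x (3*j+2) = none
    apply psi_spec_none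
    rintro ⟨n, hn⟩
    have h3 := mod3_of_mem hn
    have hd : (3:ℤ) ∣ 3 ^ n - (3 * j + 2) := Int.ModEq.dvd h3
    rcases n with _ | m
    · omega
    · have : (3:ℤ) ∣ 3 ^ (m+1) := dvd_pow_self 3 (Nat.succ_ne_zero m)
      omega
end

section
/- Let G₁, G₂, G₃ be groups and G = G₁ × G₂ × G₃. For i ∈ {1,2,3}, let A_i be a finite alphabet and X_i ⊆ A_i^G a G-subshift such that: (a) every x ∈ X_i is fixed by the shift by every element of the two factors other than G_i (e.g. for i = 1, σ^{(1,g₂,g₃)}(x) = x for all g₂ ∈ G₂, g₃ ∈ G₃); and (b) the G_i-subaction on X_i is free (e.g. for i = 1, σ^{(g₁,1,1)}(x) = x for some x ∈ X₁ implies g₁ = 1). Then the product subshift X₁ × X₂ × X₃ ⊆ (A₁ × A₂ × A₃)^G, consisting of all x with each coordinate projection in the corresponding X_i, is strongly aperiodic: σ^g(x) = x for some x ∈ X₁ × X₂ × X₃ implies g = 1_G. -/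
/-- The shift action of a group `G` on configurations `x : G → A`:
`(shift h x) g = x (h⁻¹ * g)`. -/
def shift {G A : Type} [Group G] (h : G) (x : G → A) : G → A :=
  fun g => x (h⁻¹ * g)

/-- A set of configurations is a subshift of finite type if it is the set of
configurations avoiding a finite set of forbidden patterns. -/
def IsSFT {G A : Type} [Group G] (X : Set (G → A)) : Prop :=
  ∃ (n : ℕ) (F : Fin n → Finset G) (p : (i : Fin n) → (F i → A)),
    X = {x | ∀ (i : Fin n) (g : G), ¬ ∀ h : F i, x (g * h) = p i h}

/-- A subshift: a closed, shift-invariant set of configurations. -/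
def IsSubshift {G A : Type} [Group G] [TopologicalSpace A] (X : Set (G → A)) : Prop :=
  IsClosed X ∧ ∀ g : G, shift g '' X ⊆ X

/-- A sofic subshift: the image of a subshift of finite type (over some finite
alphabet, wlog `Fin m`) under a continuous shift-equivariant map. -/
def IsSofic {G A : Type} [Group G] [TopologicalSpace A] (Y : Set (G → A)) : Prop :=
  ∃ (m : ℕ) (X : Set (G → Fin m)) (φ : (G → Fin m) → (G → A)),
    IsSFT X ∧ Continuous φ ∧
    (∀ (h : G) (x : G → Fin m), φ (shift h x) = shift h (φ x)) ∧ φ '' X = Y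

/-- A set of configurations is strongly aperiodic if the shift action on it is free. -/
def StronglyAperiodic {G A : Type} [Group G] (X : Set (G → A)) : Prop :=
  ∀ x ∈ X, ∀ g : G, shift g x = x → g = 1

/-- Evaluation of a word over the alphabet `S ∪ S⁻¹` (letters `(i, b)` with `b = true`
standing for `(s i)⁻¹`) in the group `G`. -/
def wordEval {G : Type} [Group G] {k : ℕ} (s : Fin k → G) (w : List (Fin k × Bool)) : G :=
  (w.map fun p => if p.2 then (s p.1)⁻¹ else s p.1).prod

lemma shift_mul {G A : Type} [Group G] (a b : G) (x : G → A) :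
    shift a (shift b x) = shift (a * b) x := by
  funext g
  simp [shift, mul_assoc]

/-- The key step of Lemma 4.3: if `X₁, X₂, X₃` are `(G₁ × G₂ × G₃)`-subshifts such
that each `Xᵢ` is fixed by the shift of the other two factors and the `Gᵢ`-subaction
on `Xᵢ` is free, then the product subshift `X₁ × X₂ × X₃` is strongly aperiodic. -/
theorem stmt16 {G₁ G₂ G₃ : Type} [Group G₁] [Group G₂] [Group G₃]
    {A₁ A₂ A₃ : Type}
    [Fintype A₁] [TopologicalSpace A₁] [DiscreteTopology A₁]
    [Fintype A₂] [TopologicalSpace A₂] [DiscreteTopology A₂]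
    [Fintype A₃] [TopologicalSpace A₃] [DiscreteTopology A₃]
    (X₁ : Set ((G₁ × G₂ × G₃) → A₁)) (X₂ : Set ((G₁ × G₂ × G₃) → A₂))
    (X₃ : Set ((G₁ × G₂ × G₃) → A₃))
    (hsub₁ : IsSubshift X₁) (hsub₂ : IsSubshift X₂) (hsub₃ : IsSubshift X₃)
    -- (a) each Xᵢ is fixed by the shift by elements of the other two factors
    (hfix₁ : ∀ x ∈ X₁, ∀ (g₂ : G₂) (g₃ : G₃), shift ((1 : G₁), g₂, g₃) x = x)
    (hfix₂ : ∀ x ∈ X₂, ∀ (g₁ : G₁) (g₃ : G₃), shift (g₁, (1 : G₂), g₃) x = x)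
    (hfix₃ : ∀ x ∈ X₃, ∀ (g₁ : G₁) (g₂ : G₂), shift (g₁, g₂, (1 : G₃)) x = x)
    -- (b) the Gᵢ-subaction on Xᵢ is free
    (hfree₁ : ∀ x ∈ X₁, ∀ g₁ : G₁, shift (g₁, (1 : G₂), (1 : G₃)) x = x → g₁ = 1)
    (hfree₂ : ∀ x ∈ X₂, ∀ g₂ : G₂, shift ((1 : G₁), g₂, (1 : G₃)) x = x → g₂ = 1)
    (hfree₃ : ∀ x ∈ X₃, ∀ g₃ : G₃, shift ((1 : G₁), (1 : G₂), g₃) x = x → g₃ = 1) :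
    StronglyAperiodic {x : (G₁ × G₂ × G₃) → A₁ × A₂ × A₃ |
      (fun g => (x g).1) ∈ X₁ ∧ (fun g => (x g).2.1) ∈ X₂ ∧ (fun g => (x g).2.2) ∈ X₃} := by
  rintro x ⟨h1, h2, h3⟩ ⟨g₁, g₂, g₃⟩ hx
  have e1 : shift (g₁, g₂, g₃) (fun g => (x g).1) = (fun g => (x g).1) := by
    funext g; exact congrArg Prod.fst (congrFun hx g)
  have e2 : shift (g₁, g₂, g₃) (fun g => (x g).2.1) = (fun g => (x g).2.1) := by
    funext g; exact congrArg (Prod.fst ∘ Prod.snd) (congrFun hx g)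
  have e3 : shift (g₁, g₂, g₃) (fun g => (x g).2.2) = (fun g => (x g).2.2) := by
    funext g; exact congrArg (Prod.snd ∘ Prod.snd) (congrFun hx g)
  have hg1 : g₁ = 1 := by
    apply hfree₁ _ h1
    have := hfix₁ _ h1 g₂⁻¹ g₃⁻¹
    calc shift (g₁, (1:G₂), (1:G₃)) (fun g => (x g).1)
        = shift ((g₁, g₂, g₃) * ((1:G₁), g₂⁻¹, g₃⁻¹)) (fun g => (x g).1) := by
          simp [Prod.ext_iff]
      _ = shift (g₁, g₂, g₃) (shift ((1:G₁), g₂⁻¹, g₃⁻¹) (fun g => (x g).1)) :=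
          (shift_mul _ _ _).symm
      _ = _ := by rw [this, e1]
  have hg2 : g₂ = 1 := by
    apply hfree₂ _ h2
    have := hfix₂ _ h2 g₁⁻¹ g₃⁻¹
    calc shift ((1:G₁), g₂, (1:G₃)) (fun g => (x g).2.1)
        = shift ((g₁, g₂, g₃) * (g₁⁻¹, (1:G₂), g₃⁻¹)) (fun g => (x g).2.1) := by
          simp [Prod.ext_iff]
      _ = shift (g₁, g₂, g₃) (shift (g₁⁻¹, (1:G₂), g₃⁻¹) (fun g => (x g).2.1)) :=
          (shift_mul _ _ _).symm
      _ = _ := by rw [this, e2]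
  have hg3 : g₃ = 1 := by
    apply hfree₃ _ h3
    have := hfix₃ _ h3 g₁⁻¹ g₂⁻¹
    calc shift ((1:G₁), (1:G₂), g₃) (fun g => (x g).2.2)
        = shift ((g₁, g₂, g₃) * (g₁⁻¹, g₂⁻¹, (1:G₃))) (fun g => (x g).2.2) := by
          simp [Prod.ext_iff]
      _ = shift (g₁, g₂, g₃) (shift (g₁⁻¹, g₂⁻¹, (1:G₃)) (fun g => (x g).2.2)) :=
          (shift_mul _ _ _).symm
      _ = _ := by rw [this, e3]
  simp [hg1, hg2, hg3, Prod.ext_iff]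
end

section
/- Let G be a finitely generated group with finite symmetric generating set S containing 1_G, and let (X,T) be an effectively closed G-dynamical system with respect to S. Then the set of triples (u, v, w), where u = s₁s₂⋯s_n is a word over S and v, w ∈ {0,1}*, such that [v] ∩ T^{g(u)}([w] ∩ X) = ∅ — where g(u) = s₁s₂⋯s_n ∈ G is the group element represented by u — is recursively enumerable. -/
/-- The cylinder `[w]` of all one-sided binary sequences extending the word `w`. -/
def cylinder (w : List Bool) : Set (ℕ → Bool) :=
  {x | ∀ i : Fin w.length, x i = w.get i}

/-- An action `T` of `G` on `X ⊆ {0,1}^ℕ` is effectively closed (w.r.t. the finite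
generating family `s : Fin k → G`) if the set of triples `(s, v, w)` with
`[v] ∩ T^s([w] ∩ X) = ∅` is recursively enumerable. -/
def EffAction {G : Type} [Group G] {k : ℕ} (s : Fin k → G) (X : Set (ℕ → Bool))
    (T : G → (ℕ → Bool) → (ℕ → Bool)) : Prop :=
  REPred fun q : Fin k × List Bool × List Bool =>
    cylinder q.2.1 ∩ (T (s q.1) '' (cylinder q.2.2 ∩ X)) = ∅

/-- Evaluation of a word over the generating family `s : Fin k → G`. -/
def wordEvalS {G : Type} [Group G] {k : ℕ} (s : Fin k → G) (u : List (Fin k)) : G :=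
  (u.map s).prod

set_option linter.unusedSectionVars false
set_option linter.unusedVariables false

namespace Stmt17Aux

open List

variable {k : ℕ}


lemma mem_cylinder_iff {w : List Bool} {x : ℕ → Bool} :
    x ∈ cylinder w ↔ ∀ i (h : i < w.length), x i = w[i] := by
  constructor
  · intro hx i h; simpa using hx ⟨i, h⟩
  · intro hx i; simpa using hx i.1 i.2

lemma cylinder_anti {v w : List Bool} (h : v <+: w) : cylinder w ⊆ cylinder v := by
  intro x hx
  rw [mem_cylinder_iff] at hx ⊢
  intro i hi
  rw [hx i (hi.trans_le h.length_le), List.IsPrefix.getElem h hi]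

lemma isClosed_cylinder (w : List Bool) : IsClosed (cylinder w) := by
  have : cylinder w = ⋂ i : Fin w.length, (fun x : ℕ → Bool => x i) ⁻¹' {w.get i} := by
    ext x; simp [cylinder, Set.mem_iInter, Set.mem_preimage]
  rw [this]
  exact isClosed_iInter fun i => (isClosed_singleton).preimage (continuous_apply (i : ℕ))

/-- All binary words of length `N`. -/
def allWords : ℕ → List (List Bool)
  | 0 => [[]]
  | N + 1 => (allWords N).flatMap fun z => [z ++ [false], z ++ [true]]

lemma mem_allWords_succ {z : List Bool} {N : ℕ} :
    z ∈ allWords (N + 1) ↔ ∃ y ∈ allWords N, ∃ b, z = y ++ [b] := by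
  simp only [allWords, List.mem_flatMap, List.mem_cons, List.mem_singleton]
  constructor
  · rintro ⟨y, hy, (rfl | rfl | h)⟩
    · exact ⟨y, hy, false, rfl⟩
    · exact ⟨y, hy, true, rfl⟩
    · simp at h
  · rintro ⟨y, hy, b, rfl⟩
    exact ⟨y, hy, by cases b <;> simp⟩

lemma length_of_mem_allWords : ∀ {N : ℕ} {z : List Bool}, z ∈ allWords N → z.length = N := by
  intro N
  induction N with
  | zero => intro z hz; simp [allWords] at hz; simp [hz]
  | succ N ih =>
    intro z hz
    obtain ⟨y, hy, b, rfl⟩ := mem_allWords_succ.1 hz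
    simp [ih hy]

lemma exists_prefix_of_mem_allWords {N N' : ℕ} (h : N ≤ N') :
    ∀ {z'}, z' ∈ allWords N' → ∃ z ∈ allWords N, z <+: z' := by
  induction N' with
  | zero =>
    intro z' hz'
    have : N = 0 := Nat.le_zero.1 h
    subst this
    exact ⟨z', hz', List.prefix_refl _⟩
  | succ M ih =>
    intro z' hz'
    rcases Nat.eq_or_lt_of_le h with rfl | hlt
    · exact ⟨z', hz', List.prefix_refl _⟩
    · obtain ⟨y, hy, b, rfl⟩ := mem_allWords_succ.1 hz'
      obtain ⟨z, hz, hzy⟩ := ih (Nat.lt_succ_iff.1 hlt) hy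
      exact ⟨z, hz, hzy.trans (y.prefix_append [b])⟩

lemma exists_mem_allWords_cyl (x : ℕ → Bool) (N : ℕ) :
    ∃ z ∈ allWords N, x ∈ cylinder z := by
  induction N with
  | zero => exact ⟨[], by simp [allWords], fun i => i.elim0⟩
  | succ N ih =>
    obtain ⟨z, hz, hx⟩ := ih
    have hlen := length_of_mem_allWords hz
    refine ⟨z ++ [x N], mem_allWords_succ.2 ⟨z, hz, x N, rfl⟩, ?_⟩
    rw [mem_cylinder_iff] at hx ⊢
    intro i hi
    rcases Nat.lt_or_ge i z.length with h' | h'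
    · rw [List.getElem_append_left h']
      exact hx i h'
    · have : i = z.length := by
        have : i < z.length + 1 := by simpa using hi
        omega
      subst this
      simp [hlen]

open Filter Topology

/-- Key compactness fact: two disjoint closed subsets of Cantor space are separated at
some finite resolution. -/
lemma key {A Y : Set (ℕ → Bool)} (hA : IsClosed A) (hY : IsClosed Y) (hd : A ∩ Y = ∅) :
    ∃ N, ∀ z ∈ allWords N, cylinder z ∩ A = ∅ ∨ cylinder z ∩ Y = ∅ := by
  by_contra hcon
  push_neg at hcon
  choose z hz h1 h2 using hcon
  choose a ha using h1
  choose y hy using h2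
  -- `a N` and `y N` agree on coordinates `< N`
  have hagree : ∀ N i, i < N → a N i = y N i := by
    intro N i hi
    have hlen := length_of_mem_allWords (hz N)
    have e1 := mem_cylinder_iff.1 (ha N).1 i (by omega)
    have e2 := mem_cylinder_iff.1 (hy N).1 i (by omega)
    rw [e1, e2]
  -- extract a convergent subsequence of `a`
  obtain ⟨x, hxA, φ, hφ, hconv⟩ := (hA.isCompact).tendsto_subseq (fun N => (ha N).2)
  have hyconv : Tendsto (fun n => y (φ n)) atTop (𝓝 x) := by
    rw [tendsto_pi_nhds] at hconv ⊢
    intro i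
    have h1 : ∀ᶠ n in atTop, a (φ n) i = x i := by
      have := hconv i
      rwa [nhds_discrete, tendsto_pure] at this
    have h2 : ∀ᶠ n in atTop, y (φ n) i = a (φ n) i := by
      filter_upwards [eventually_ge_atTop (i + 1)] with n hn
      exact (hagree (φ n) i (lt_of_lt_of_le hn (hφ.le_apply))).symm
    rw [nhds_discrete, tendsto_pure]
    filter_upwards [h1, h2] with n e1 e2
    rw [e2, e1]
  have hxY : x ∈ Y := hY.mem_of_tendsto hyconv (Eventually.of_forall fun n => (hy (φ n)).2)
  have : x ∈ A ∩ Y := ⟨hxA, hxY⟩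
  rw [hd] at this
  exact this

def hhat (h : Fin k × List Bool × List Bool → ℕ → Bool) (i : Fin k)
    (v w : List Bool) (N : ℕ) : Bool :=
  v.inits.any fun v' => w.inits.any fun w' => h (i, v', w') N

def check (h : Fin k × List Bool × List Bool → ℕ → Bool) (i₀ : Fin k) :
    List (Fin k) → List Bool → List Bool → ℕ → Bool
  | [], v, w, N => hhat h i₀ v w N
  | a :: u, v, w, N =>
    (List.range (allWords N).length).all fun j =>
      hhat h a v ((allWords N).getD j []) N || check h i₀ u ((allWords N).getD j []) w N

lemma getD_map_range {X : Type} (f : ℕ → X) {n j : ℕ} (d : X) (hj : j < n) :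
    ((List.range n).map f).getD j d = f j := by
  rw [List.getD_eq_getElem _ _ (by simpa using hj)]
  simp


lemma hhat_iff {h : Fin k × List Bool × List Bool → ℕ → Bool} {i v w N} :
    hhat h i v w N = true ↔ ∃ v' , v' <+: v ∧ ∃ w', w' <+: w ∧ h (i, v', w') N = true := by
  simp [hhat, List.any_eq_true, List.mem_inits]

lemma forall_getD_iff {l : List (List Bool)} {p : List Bool → Prop} :
    (∀ j ∈ List.range l.length, p (l.getD j [])) ↔ ∀ z ∈ l, p z := by
  constructor
  · intro H z hz
    obtain ⟨j, hj, rfl⟩ := List.mem_iff_getElem.1 hz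
    have := H j (List.mem_range.2 hj)
    rwa [List.getD_eq_getElem _ _ hj] at this
  · intro H j hj
    rw [List.mem_range] at hj
    rw [List.getD_eq_getElem _ _ hj]
    exact H _ (List.getElem_mem hj)

lemma check_cons_iff {h : Fin k × List Bool × List Bool → ℕ → Bool} {i₀ a u v w N} :
    check h i₀ (a :: u) v w N = true ↔
      ∀ z ∈ allWords N, hhat h a v z N = true ∨ check h i₀ u z w N = true := by
  simp only [check]
  rw [List.all_eq_true]
  rw [← forall_getD_iff (p := fun z => hhat h a v z N = true ∨ check h i₀ u z w N = true)]
  simp [Bool.or_eq_true]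


section mono
variable {h : Fin k × List Bool × List Bool → ℕ → Bool}

lemma hhat_mono (hmono : ∀ q N N', N ≤ N' → h q N = true → h q N' = true)
    {i v v' w w' N N'} (hv : v <+: v') (hw : w <+: w') (hN : N ≤ N')
    (H : hhat h i v w N = true) : hhat h i v' w' N' = true := by
  obtain ⟨v₁, h1, w₁, h2, h3⟩ := hhat_iff.1 H
  exact hhat_iff.2 ⟨v₁, h1.trans hv, w₁, h2.trans hw, hmono _ _ _ hN h3⟩

lemma check_mono (hmono : ∀ q N N', N ≤ N' → h q N = true → h q N' = true)
    {i₀ : Fin k} : ∀ {u : List (Fin k)} {v v' w N N'}, v <+: v' → N ≤ N' →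
    check h i₀ u v w N = true → check h i₀ u v' w N' = true := by
  intro u
  induction u with
  | nil => exact fun hv hN H => hhat_mono hmono hv List.prefix_rfl hN H
  | cons a u ih =>
    intro v v' w N N' hv hN H
    rw [check_cons_iff] at H ⊢
    intro z' hz'
    obtain ⟨z, hz, hzz'⟩ := exists_prefix_of_mem_allWords hN hz'
    rcases H z hz with H' | H'
    · exact Or.inl (hhat_mono hmono hv hzz' hN H')
    · exact Or.inr (ih hzz' hN H')

end mono

variable {G : Type} [Group G] {k : ℕ}

section sem
variable (T : G → (ℕ → Bool) → (ℕ → Bool)) (X : Set (ℕ → Bool))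

/-- `[v] ∩ T^g([w] ∩ X) = ∅`. -/
def sem (g : G) (v w : List Bool) : Prop :=
  cylinder v ∩ (T g '' (cylinder w ∩ X)) = ∅

variable {T X}

lemma sem_anti {g : G} {v w v' w' : List Bool} (hv : v <+: v') (hw : w <+: w')
    (h : sem T X g v w) : sem T X g v' w' := by
  refine Set.eq_empty_of_subset_empty ?_
  rw [← h]
  exact Set.inter_subset_inter (cylinder_anti hv)
    (Set.image_mono (Set.inter_subset_inter (cylinder_anti hw) subset_rfl))

/-- The key step equivalence. -/
lemma step (hX : IsClosed X) (hTcont : ∀ g : G, ContinuousOn (T g) X)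
    (hTX : ∀ g : G, T g '' X = X)
    (hTmul : ∀ g h : G, ∀ x ∈ X, T (g * h) x = T g (T h x))
    (a : G) (g : G) (v w : List Bool) :
    sem T X (a * g) v w ↔
      ∃ N, ∀ z ∈ allWords N, sem T X a v z ∨ sem T X g z w := by
  classical
  set Y : Set (ℕ → Bool) := T g '' (cylinder w ∩ X) with hYdef
  have hYX : Y ⊆ X := by
    have h0 : T g '' (cylinder w ∩ X) ⊆ T g '' X :=
      Set.image_mono Set.inter_subset_right
    rw [hTX g] at h0
    exact h0
  have hYcompact : IsCompact Y := by
    have h1 : IsCompact (cylinder w ∩ X) :=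
      ((isClosed_cylinder w).inter hX).isCompact
    exact h1.image_of_continuousOn ((hTcont g).mono Set.inter_subset_right)
  have hYclosed : IsClosed Y := hYcompact.isClosed
  set A : Set (ℕ → Bool) := X ∩ T a ⁻¹' (cylinder v) with hAdef
  have hAclosed : IsClosed A :=
    (hTcont a).preimage_isClosed_of_isClosed hX (isClosed_cylinder v)
  -- rewrite LHS
  have himg : T (a * g) '' (cylinder w ∩ X) = T a '' Y := by
    rw [hYdef, ← Set.image_comp]
    apply Set.image_congr
    intro x hx
    exact hTmul a g x hx.2
  -- sem T X a v z ↔ cylinder z ∩ A = ∅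
  have hsemA : ∀ z : List Bool, sem T X a v z ↔ cylinder z ∩ A = ∅ := by
    intro z
    unfold sem
    constructor
    · intro H
      rw [Set.eq_empty_iff_forall_notMem] at H ⊢
      rintro x ⟨hxz, hxX, hxv⟩
      exact H (T a x) ⟨hxv, x, ⟨hxz, hxX⟩, rfl⟩
    · intro H
      rw [Set.eq_empty_iff_forall_notMem] at H ⊢
      rintro y ⟨hyv, x, ⟨hxz, hxX⟩, rfl⟩
      exact H x ⟨hxz, hxX, hyv⟩
  -- LHS ↔ A ∩ Y = ∅
  have hmain : sem T X (a * g) v w ↔ A ∩ Y = ∅ := by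
    unfold sem
    rw [himg]
    constructor
    · intro H
      rw [Set.eq_empty_iff_forall_notMem] at H ⊢
      rintro x ⟨⟨hxX, hxv⟩, hxY⟩
      exact H (T a x) ⟨hxv, x, hxY, rfl⟩
    · intro H
      rw [Set.eq_empty_iff_forall_notMem] at H ⊢
      rintro y ⟨hyv, x, hxY, rfl⟩
      exact H x ⟨⟨hYX hxY, hyv⟩, hxY⟩
  rw [hmain]
  constructor
  · intro H
    obtain ⟨N, hN⟩ := key hAclosed hYclosed H
    refine ⟨N, fun z hz => ?_⟩
    rcases hN z hz with h' | h'
    · exact Or.inl ((hsemA z).2 h')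
    · exact Or.inr h'
  · rintro ⟨N, hN⟩
    rw [Set.eq_empty_iff_forall_notMem]
    rintro x ⟨hxA, hxY⟩
    obtain ⟨z, hz, hxz⟩ := exists_mem_allWords_cyl x N
    rcases hN z hz with h' | h'
    · rw [hsemA z, Set.eq_empty_iff_forall_notMem] at h'
      exact h' x ⟨hxz, hxA⟩
    · have h'' : cylinder z ∩ Y = ∅ := h'
      rw [Set.eq_empty_iff_forall_notMem] at h''
      exact h'' x ⟨hxz, hxY⟩
end sem

/-- Uniform witness over a finite list for a monotone family. -/
lemma list_witness {α : Type} {D : α → ℕ → Prop}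
    (mono : ∀ a N N', N ≤ N' → D a N → D a N') :
    ∀ {l : List α}, (∀ a ∈ l, ∃ N, D a N) → ∃ N, ∀ a ∈ l, D a N := by
  intro l
  induction l with
  | nil => exact fun _ => ⟨0, by simp⟩
  | cons a l ih =>
    intro H
    obtain ⟨N₁, hN₁⟩ := H a (by simp)
    obtain ⟨N₂, hN₂⟩ := ih fun b hb => H b (by simp [hb])
    refine ⟨max N₁ N₂, ?_⟩
    intro b hb
    rcases List.mem_cons.1 hb with rfl | hb'
    · exact mono _ _ _ (le_max_left _ _) hN₁
    · exact mono _ _ _ (le_max_right _ _) (hN₂ b hb')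

/-- The main equivalence. -/
lemma main_equiv {s : Fin k → G} {X : Set (ℕ → Bool)}
    {T : G → (ℕ → Bool) → (ℕ → Bool)}
    (hX : IsClosed X) (hTcont : ∀ g : G, ContinuousOn (T g) X)
    (hTX : ∀ g : G, T g '' X = X) (hT1 : ∀ x ∈ X, T 1 x = x)
    (hTmul : ∀ g h : G, ∀ x ∈ X, T (g * h) x = T g (T h x))
    {i₀ : Fin k} (hi₀ : s i₀ = 1)
    {h : Fin k × List Bool × List Bool → ℕ → Bool}
    (hmono : ∀ q N N', N ≤ N' → h q N = true → h q N' = true)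
    (hspec : ∀ q : Fin k × List Bool × List Bool,
      sem T X (s q.1) q.2.1 q.2.2 ↔ ∃ N, h q N = true) :
    ∀ (u : List (Fin k)) (v w : List Bool),
      sem T X (wordEvalS s u) v w ↔ ∃ N, check h i₀ u v w N = true := by
  intro u
  induction u with
  | nil =>
    intro v w
    have h1 : wordEvalS s [] = s i₀ := by simp [wordEvalS, hi₀]
    rw [h1]
    constructor
    · intro H
      obtain ⟨N, hN⟩ := (hspec (i₀, v, w)).1 H
      refine ⟨N, ?_⟩
      show hhat h i₀ v w N = true
      exact hhat_iff.2 ⟨v, List.prefix_rfl, w, List.prefix_rfl, hN⟩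
    · rintro ⟨N, hN⟩
      have hN' : hhat h i₀ v w N = true := hN
      obtain ⟨v', hv', w', hw', hh⟩ := hhat_iff.1 hN'
      exact sem_anti hv' hw' ((hspec (i₀, v', w')).2 ⟨N, hh⟩)
  | cons a u ih =>
    intro v w
    have h1 : wordEvalS s (a :: u) = s a * wordEvalS s u := by
      simp [wordEvalS]
    rw [h1, step hX hTcont hTX hTmul]
    constructor
    · rintro ⟨n, hn⟩
      -- produce witnesses for each word in `allWords n`
      have hwit : ∀ z ∈ allWords n, ∃ N,
          h (a, v, z) N = true ∨ check h i₀ u z w N = true := by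
        intro z hz
        rcases hn z hz with H | H
        · obtain ⟨N, hN⟩ := (hspec (a, v, z)).1 H
          exact ⟨N, Or.inl hN⟩
        · obtain ⟨N, hN⟩ := (ih z w).1 H
          exact ⟨N, Or.inr hN⟩
      have mono' : ∀ (z : List Bool) N N', N ≤ N' →
          (h (a, v, z) N = true ∨ check h i₀ u z w N = true) →
          (h (a, v, z) N' = true ∨ check h i₀ u z w N' = true) := by
        intro z N N' hle H
        rcases H with H | H
        · exact Or.inl (hmono _ _ _ hle H)
        · exact Or.inr (check_mono hmono List.prefix_rfl hle H)
      obtain ⟨N₁, hN₁⟩ := list_witness mono' hwit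
      refine ⟨max n N₁, check_cons_iff.2 ?_⟩
      intro z' hz'
      obtain ⟨z, hz, hzz'⟩ := exists_prefix_of_mem_allWords (le_max_left n N₁) hz'
      rcases hN₁ z hz with H | H
      · refine Or.inl (hhat_mono hmono List.prefix_rfl List.prefix_rfl (le_max_right n N₁) ?_)
        exact hhat_iff.2 ⟨v, List.prefix_rfl, z, hzz', H⟩
      · exact Or.inr (check_mono hmono hzz' (le_max_right n N₁) H)
    · rintro ⟨N, hN⟩
      rw [check_cons_iff] at hN
      refine ⟨N, fun z hz => ?_⟩
      rcases hN z hz with H | H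
      · obtain ⟨v', hv', z', hz', hh⟩ := hhat_iff.1 H
        exact Or.inl (sem_anti hv' hz' ((hspec (a, v', z')).2 ⟨N, hh⟩))
      · exact Or.inr ((ih z w).2 ⟨N, H⟩)

lemma primrec_list_all {α β : Type} [Primcodable α] [Primcodable β]
    {f : α → List β} {p : α → β → Bool} (hf : Primrec f) (hp : Primrec₂ p) :
    Primrec fun a => (f a).all (p a) := by
  have hstep : Primrec₂ fun (a : α) (bs : β × Bool) => p a bs.1 && bs.2 :=
    ((Primrec.dom_bool₂ (· && ·)).comp
      (hp.comp Primrec.fst (Primrec.fst.comp Primrec.snd))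
      (Primrec.snd.comp Primrec.snd)).to₂
  have h1 := Primrec.list_foldr hf (Primrec.const true) hstep
  refine h1.of_eq fun a => ?_
  generalize f a = l
  induction l with
  | nil => rfl
  | cons b l ih => simp only [List.foldr_cons, List.all_cons, ih]

lemma primrec_list_any {α β : Type} [Primcodable α] [Primcodable β]
    {f : α → List β} {p : α → β → Bool} (hf : Primrec f) (hp : Primrec₂ p) :
    Primrec fun a => (f a).any (p a) := by
  have hstep : Primrec₂ fun (a : α) (bs : β × Bool) => p a bs.1 || bs.2 :=
    ((Primrec.dom_bool₂ (· || ·)).comp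
      (hp.comp Primrec.fst (Primrec.fst.comp Primrec.snd))
      (Primrec.snd.comp Primrec.snd)).to₂
  have h1 := Primrec.list_foldr hf (Primrec.const false) hstep
  refine h1.of_eq fun a => ?_
  generalize f a = l
  induction l with
  | nil => rfl
  | cons b l ih => simp only [List.foldr_cons, List.any_cons, ih]

lemma primrec_allWords : Primrec allWords := by
  have hstep : Primrec₂ fun (_ : ℕ) (IH : List (List Bool)) =>
      IH.flatMap fun z => [z ++ [false], z ++ [true]] := by
    have hfalse : Primrec fun (x : (ℕ × List (List Bool)) × List Bool) => x.2 ++ [false] :=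
      Primrec.list_concat.comp Primrec.snd (Primrec.const false)
    have htrue : Primrec fun (x : (ℕ × List (List Bool)) × List Bool) => x.2 ++ [true] :=
      Primrec.list_concat.comp Primrec.snd (Primrec.const true)
    have hbig : Primrec fun (x : ℕ × List (List Bool)) =>
        x.2.flatMap fun z => [z ++ [false], z ++ [true]] :=
      Primrec.list_flatMap Primrec.snd ((Primrec.list_cons.comp hfalse
        (Primrec.list_cons.comp htrue (Primrec.const []))).to₂)
    exact hbig.to₂
  have h1 := Primrec.nat_rec₁ ([[]] : List (List Bool)) hstep
  refine h1.of_eq fun N => ?_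
  induction N with
  | zero => rfl
  | succ n ih =>
    show (Nat.rec [[]] _ n : List (List Bool)).flatMap _ = allWords (n + 1)
    rw [ih]
    rfl

lemma primrec_inits : Primrec (List.inits : List Bool → List (List Bool)) := by
  have hstep : Primrec₂ fun (_ : List Bool) (x : Bool × List Bool × List (List Bool)) =>
      ([] : List Bool) :: x.2.2.map fun t => x.1 :: t := by
    have hmap : Primrec fun (x : List Bool × Bool × List Bool × List (List Bool)) =>
        x.2.2.2.map fun t => x.2.1 :: t :=
      Primrec.list_map (Primrec.snd.comp (Primrec.snd.comp Primrec.snd))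
        ((Primrec.list_cons.comp (Primrec.fst.comp (Primrec.snd.comp Primrec.fst))
          Primrec.snd).to₂)
    exact (Primrec.list_cons.comp (Primrec.const []) hmap).to₂
  have key : ∀ l : List Bool,
      (List.rec [[]] (fun b _ IH => ([] : List Bool) :: IH.map fun t => b :: t) l :
        List (List Bool)) = l.inits := by
    intro l
    induction l with
    | nil => rfl
    | cons a l ih =>
      show ([] : List Bool) :: _ = _
      rw [ih, List.inits_cons]
  have h1 := Primrec.list_rec Primrec.id (Primrec.const [[]]) hstep
  exact h1.of_eq fun l => key l


section prim
variable {h : Fin k × List Bool × List Bool → ℕ → Bool}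

lemma primrec_hhat (hp : Primrec fun x : (Fin k × List Bool × List Bool) × ℕ => h x.1 x.2) :
    Primrec fun x : (Fin k × List Bool × List Bool) × ℕ =>
      hhat h x.1.1 x.1.2.1 x.1.2.2 x.2 := by
  unfold hhat
  have pg2 : Primrec fun z : (((Fin k × List Bool × List Bool) × ℕ) × List Bool) × List Bool =>
      ((z.1.1.1.1, z.1.2, z.2), z.1.1.2) :=
    Primrec.pair
      (Primrec.pair (Primrec.fst.comp (Primrec.fst.comp (Primrec.fst.comp Primrec.fst)))
        (Primrec.pair (Primrec.snd.comp Primrec.fst) Primrec.snd))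
      (Primrec.snd.comp (Primrec.fst.comp Primrec.fst))
  have t2 := hp.comp pg2
  have hinner2 : Primrec fun z : (((Fin k × List Bool × List Bool) × ℕ) × List Bool) × List Bool =>
      h (z.1.1.1.1, z.1.2, z.2) z.1.1.2 := t2
  have t1 := primrec_list_any (primrec_inits.comp
    (Primrec.snd.comp (Primrec.snd.comp (Primrec.fst.comp Primrec.fst)))) hinner2.to₂
  have hinner : Primrec fun y : ((Fin k × List Bool × List Bool) × ℕ) × List Bool =>
      y.1.1.2.2.inits.any fun w' => h (y.1.1.1, y.2, w') y.1.2 := t1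
  have t0 := primrec_list_any (primrec_inits.comp
    (Primrec.fst.comp (Primrec.snd.comp Primrec.fst))) hinner.to₂
  exact t0

end prim

/-- The table of `check` values over all words of length `N`, as a structural recursion. -/
def tblRec (h : Fin k × List Bool × List Bool → ℕ → Bool) (i₀ : Fin k)
    (N : ℕ) (w : List Bool) : List (Fin k) → List Bool
  | [] => (List.range (allWords N).length).map fun j => hhat h i₀ ((allWords N).getD j []) w N
  | a :: u => (List.range (allWords N).length).map fun j =>
      (List.range (allWords N).length).all fun j' =>
        hhat h a ((allWords N).getD j []) ((allWords N).getD j' []) N ||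
          (tblRec h i₀ N w u).getD j' false

lemma tblRec_getD {h : Fin k × List Bool × List Bool → ℕ → Bool} {i₀ : Fin k}
    {N : ℕ} {w : List Bool} {u : List (Fin k)} {j : ℕ} (hj : j < (allWords N).length) :
    (tblRec h i₀ N w u).getD j false = check h i₀ u ((allWords N).getD j []) w N := by
  induction u generalizing j with
  | nil =>
    show ((List.range (allWords N).length).map _).getD j false = _
    rw [getD_map_range _ _ hj]
    rfl
  | cons a u ih =>
    show ((List.range (allWords N).length).map _).getD j false = _
    rw [getD_map_range _ _ hj]
    show ((List.range (allWords N).length).all _) = _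
    unfold check
    rw [Bool.eq_iff_iff, List.all_eq_true, List.all_eq_true]
    constructor
    · intro H j' hj'
      have := H j' hj'
      rw [Bool.or_eq_true] at this ⊢
      rcases this with h' | h'
      · exact Or.inl h'
      · exact Or.inr (by rw [← ih (List.mem_range.1 hj')]; exact h')
    · intro H j' hj'
      have := H j' hj'
      rw [Bool.or_eq_true] at this ⊢
      rcases this with h' | h'
      · exact Or.inl h'
      · exact Or.inr (by rw [ih (List.mem_range.1 hj')]; exact h')

section prim2
variable {h : Fin k × List Bool × List Bool → ℕ → Bool}

set_option maxHeartbeats 2000000 in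
lemma primrec_tblRec (hp : Primrec fun x : (Fin k × List Bool × List Bool) × ℕ => h x.1 x.2)
    (i₀ : Fin k) :
    Primrec fun x : (ℕ × List Bool) × List (Fin k) => tblRec h i₀ x.1.1 x.1.2 x.2 := by
  have hhp := primrec_hhat hp
  have hrange : Primrec fun N : ℕ => List.range (allWords N).length :=
    Primrec.list_range.comp (Primrec.list_length.comp primrec_allWords)
  have tgd := (Primrec.list_getD ([] : List Bool)).comp
    (primrec_allWords.comp (Primrec.fst (β := ℕ))) Primrec.snd
  have hgd : Primrec fun y : ℕ × ℕ => (allWords y.1).getD y.2 [] := tgd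
  -- base case function
  have hg : Primrec fun a : (ℕ × List Bool) × List (Fin k) =>
      (List.range (allWords a.1.1).length).map fun j =>
        hhat h i₀ ((allWords a.1.1).getD j []) a.1.2 a.1.1 := by
    have hN : Primrec fun y : ((ℕ × List Bool) × List (Fin k)) × ℕ => y.1.1.1 :=
      Primrec.fst.comp (Primrec.fst.comp Primrec.fst)
    have hw : Primrec fun y : ((ℕ × List Bool) × List (Fin k)) × ℕ => y.1.1.2 :=
      Primrec.snd.comp (Primrec.fst.comp Primrec.fst)
    have hj : Primrec fun y : ((ℕ × List Bool) × List (Fin k)) × ℕ => y.2 := Primrec.snd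
    have t3 := hgd.comp (hN.pair hj)
    have targ : Primrec fun y : ((ℕ × List Bool) × List (Fin k)) × ℕ =>
        ((i₀, (allWords y.1.1.1).getD y.2 [], y.1.1.2), y.1.1.1) :=
      (((Primrec.const i₀).pair (t3.pair hw)).pair hN)
    have t4 := hhp.comp targ
    have tb : Primrec fun y : ((ℕ × List Bool) × List (Fin k)) × ℕ =>
        hhat h i₀ ((allWords y.1.1.1).getD y.2 []) y.1.1.2 y.1.1.1 := t4
    have t5 := Primrec.list_map (hrange.comp (Primrec.fst.comp Primrec.fst)) tb.to₂
    exact t5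
  -- step function
  have hstep : Primrec fun y : ((ℕ × List Bool) × List (Fin k)) ×
      (Fin k × List (Fin k) × List Bool) =>
      (List.range (allWords y.1.1.1).length).map fun j =>
        (List.range (allWords y.1.1.1).length).all fun j' =>
          hhat h y.2.1 ((allWords y.1.1.1).getD j []) ((allWords y.1.1.1).getD j' []) y.1.1.1 ||
            y.2.2.2.getD j' false := by
    set γ := ((ℕ × List Bool) × List (Fin k)) × (Fin k × List (Fin k) × List Bool) with hγ
    have hNγ : Primrec fun y : γ => y.1.1.1 := Primrec.fst.comp (Primrec.fst.comp Primrec.fst)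
    have hNδ : Primrec fun d : γ × ℕ => d.1.1.1.1 := hNγ.comp Primrec.fst
    have hNε : Primrec fun e : (γ × ℕ) × ℕ => e.1.1.1.1.1 := hNδ.comp Primrec.fst
    have hb : Primrec fun e : (γ × ℕ) × ℕ => e.1.1.2.1 :=
      Primrec.fst.comp (Primrec.snd.comp (Primrec.fst.comp Primrec.fst))
    have hIH : Primrec fun e : (γ × ℕ) × ℕ => e.1.1.2.2.2 :=
      Primrec.snd.comp (Primrec.snd.comp (Primrec.snd.comp (Primrec.fst.comp Primrec.fst)))
    have hj : Primrec fun e : (γ × ℕ) × ℕ => e.1.2 := Primrec.snd.comp Primrec.fst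
    have hj' : Primrec fun e : (γ × ℕ) × ℕ => e.2 := Primrec.snd
    have t6 := hgd.comp (hNε.pair hj)
    have t7 := hgd.comp (hNε.pair hj')
    have targ : Primrec fun e : (γ × ℕ) × ℕ =>
        ((e.1.1.2.1, (allWords e.1.1.1.1.1).getD e.1.2 [],
          (allWords e.1.1.1.1.1).getD e.2 []), e.1.1.1.1.1) :=
      (hb.pair (t6.pair t7)).pair hNε
    have t8 := hhp.comp targ
    have e1 : Primrec fun e : (γ × ℕ) × ℕ =>
        hhat h e.1.1.2.1 ((allWords e.1.1.1.1.1).getD e.1.2 [])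
          ((allWords e.1.1.1.1.1).getD e.2 []) e.1.1.1.1.1 := t8
    have t9 := (Primrec.list_getD false).comp hIH hj'
    have e2 : Primrec fun e : (γ × ℕ) × ℕ => e.1.1.2.2.2.getD e.2 false := t9
    have t10 := (Primrec.dom_bool₂ (· || ·)).comp e1 e2
    have hbody : Primrec fun e : (γ × ℕ) × ℕ =>
        hhat h e.1.1.2.1 ((allWords e.1.1.1.1.1).getD e.1.2 [])
          ((allWords e.1.1.1.1.1).getD e.2 []) e.1.1.1.1.1 || e.1.1.2.2.2.getD e.2 false := t10
    have t11 := primrec_list_all (hrange.comp hNδ) hbody.to₂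
    have hinner : Primrec fun d : γ × ℕ =>
        (List.range (allWords d.1.1.1.1).length).all fun j' =>
          hhat h d.1.2.1 ((allWords d.1.1.1.1).getD d.2 [])
            ((allWords d.1.1.1.1).getD j' []) d.1.1.1.1 || d.1.2.2.2.getD j' false := t11
    have t12 := Primrec.list_map (hrange.comp hNγ) hinner.to₂
    exact t12
  have h1 := Primrec.list_rec (Primrec.snd :
      Primrec fun a : (ℕ × List Bool) × List (Fin k) => a.2) hg hstep.to₂
  refine h1.of_eq fun a => ?_
  obtain ⟨⟨N, w⟩, u⟩ := a
  induction u with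
  | nil => rfl
  | cons a u ih =>
    exact congrArg (fun t : List Bool => (List.range (allWords N).length).map fun j =>
      (List.range (allWords N).length).all fun j' =>
        hhat h a ((allWords N).getD j []) ((allWords N).getD j' []) N ||
          t.getD j' false) ih

set_option maxHeartbeats 2000000 in
lemma primrec_check (hp : Primrec fun x : (Fin k × List Bool × List Bool) × ℕ => h x.1 x.2)
    (i₀ : Fin k) :
    Primrec fun x : (List (Fin k) × List Bool × List Bool) × ℕ =>
      check h i₀ x.1.1 x.1.2.1 x.1.2.2 x.2 := by
  have hhp := primrec_hhat hp
  set α := (List (Fin k) × List Bool × List Bool) × ℕ with hα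
  have hrange : Primrec fun N : ℕ => List.range (allWords N).length :=
    Primrec.list_range.comp (Primrec.list_length.comp primrec_allWords)
  have tgd := (Primrec.list_getD ([] : List Bool)).comp
    (primrec_allWords.comp (Primrec.fst (β := ℕ))) Primrec.snd
  have hgd : Primrec fun y : ℕ × ℕ => (allWords y.1).getD y.2 [] := tgd
  have hNα : Primrec fun x : α => x.2 := Primrec.snd
  have hvα : Primrec fun x : α => x.1.2.1 := Primrec.fst.comp (Primrec.snd.comp Primrec.fst)
  have hwα : Primrec fun x : α => x.1.2.2 := Primrec.snd.comp (Primrec.snd.comp Primrec.fst)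
  have huα : Primrec fun x : α => x.1.1 := Primrec.fst.comp Primrec.fst
  -- nil case
  have t0 := hhp.comp (((Primrec.const i₀).pair (hvα.pair hwα)).pair hNα)
  have hg : Primrec fun x : α => hhat h i₀ x.1.2.1 x.1.2.2 x.2 := t0
  -- cons case
  have hstep : Primrec fun y : α × (Fin k × List (Fin k)) =>
      (List.range (allWords y.1.2).length).all fun j =>
        hhat h y.2.1 y.1.1.2.1 ((allWords y.1.2).getD j []) y.1.2 ||
          (tblRec h i₀ y.1.2 y.1.1.2.2 y.2.2).getD j false := by
    set γ := α × (Fin k × List (Fin k)) with hγ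
    have hNγ : Primrec fun y : γ => y.1.2 := hNα.comp Primrec.fst
    have hNδ : Primrec fun d : γ × ℕ => d.1.1.2 := hNγ.comp Primrec.fst
    have hvδ : Primrec fun d : γ × ℕ => d.1.1.1.2.1 := hvα.comp (Primrec.fst.comp Primrec.fst)
    have hwδ : Primrec fun d : γ × ℕ => d.1.1.1.2.2 := hwα.comp (Primrec.fst.comp Primrec.fst)
    have haδ : Primrec fun d : γ × ℕ => d.1.2.1 :=
      Primrec.fst.comp (Primrec.snd.comp Primrec.fst)
    have huδ : Primrec fun d : γ × ℕ => d.1.2.2 :=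
      Primrec.snd.comp (Primrec.snd.comp Primrec.fst)
    have hjδ : Primrec fun d : γ × ℕ => d.2 := Primrec.snd
    have t1 := hgd.comp (hNδ.pair hjδ)
    have t2 := hhp.comp ((haδ.pair (hvδ.pair t1)).pair hNδ)
    have e1 : Primrec fun d : γ × ℕ =>
        hhat h d.1.2.1 d.1.1.1.2.1 ((allWords d.1.1.2).getD d.2 []) d.1.1.2 := t2
    have t3 := (primrec_tblRec hp i₀).comp ((hNδ.pair hwδ).pair huδ)
    have t4 := (Primrec.list_getD false).comp t3 hjδ
    have e2 : Primrec fun d : γ × ℕ =>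
        (tblRec h i₀ d.1.1.2 d.1.1.1.2.2 d.1.2.2).getD d.2 false := t4
    have t5 := (Primrec.dom_bool₂ (· || ·)).comp e1 e2
    have hbody : Primrec fun d : γ × ℕ =>
        hhat h d.1.2.1 d.1.1.1.2.1 ((allWords d.1.1.2).getD d.2 []) d.1.1.2 ||
          (tblRec h i₀ d.1.1.2 d.1.1.1.2.2 d.1.2.2).getD d.2 false := t5
    have t6 := primrec_list_all (hrange.comp hNγ) hbody.to₂
    exact t6
  have h1 := Primrec.list_casesOn huα hg hstep.to₂
  refine h1.of_eq fun x => ?_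
  obtain ⟨⟨u, v, w⟩, N⟩ := x
  cases u with
  | nil => rfl
  | cons a u =>
    show ((List.range (allWords N).length).all fun j =>
        hhat h a v ((allWords N).getD j []) N ||
          (tblRec h i₀ N w u).getD j false) = check h i₀ (a :: u) v w N
    unfold check
    rw [Bool.eq_iff_iff, List.all_eq_true, List.all_eq_true]
    constructor
    · intro H j hj
      have := H j hj
      rw [Bool.or_eq_true] at this ⊢
      rcases this with h' | h'
      · exact Or.inl h'
      · exact Or.inr (by rw [← tblRec_getD (List.mem_range.1 hj)]; exact h')
    · intro H j hj
      have := H j hj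
      rw [Bool.or_eq_true] at this ⊢
      rcases this with h' | h'
      · exact Or.inl h'
      · exact Or.inr (by rw [tblRec_getD (List.mem_range.1 hj)]; exact h')

end prim2

lemma rePred_of_exists {α : Type} [Primcodable α] {p : α → Prop} {R : α → ℕ → Bool}
    (hR : Primrec fun x : α × ℕ => R x.1 x.2) (hiff : ∀ a, p a ↔ ∃ N, R a N = true) :
    REPred p := by
  have hcomp : Computable₂ R := (Primrec₂.to_comp (hR.to₂ : Primrec₂ R))
  have hpart : Partrec fun a : α => Nat.rfind fun n => (R a n : Part Bool) :=
    Partrec.rfind hcomp.partrec₂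
  have h2 : Partrec fun a : α => (Nat.rfind fun n => (R a n : Part Bool)).map fun _ => () :=
    hpart.map (Computable.const ()).to₂
  refine h2.of_eq fun a => ?_
  apply Part.ext'
  · simp only [Part.map_Dom, Nat.rfind_dom]
    constructor
    · rintro ⟨n, hn, -⟩
      have hpa : p a := (hiff a).2 ⟨n, by simpa using hn⟩
      exact ⟨hpa, trivial⟩
    · rintro ⟨hpa, -⟩
      obtain ⟨N, hN⟩ := (hiff a).1 hpa
      exact ⟨N, by simp [hN], fun {m} _ => by simp⟩
  · intro h1 h2
    rfl


open Nat.Partrec (Code)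
open Nat.Partrec.Code

lemma exists_halting_approx {α : Type} [Primcodable α] {p : α → Prop} (hp : REPred p) :
    ∃ h : α → ℕ → Bool,
      (Primrec fun x : α × ℕ => h x.1 x.2) ∧
      (∀ q N N', N ≤ N' → h q N = true → h q N' = true) ∧
      (∀ q, p q ↔ ∃ N, h q N = true) := by
  unfold REPred at hp
  unfold Partrec at hp
  obtain ⟨c, hc⟩ := Code.exists_code.1 hp
  refine ⟨fun q N => (evaln N c (Encodable.encode q)).isSome, ?_, ?_, ?_⟩
  · have h1 : Primrec fun x : α × ℕ => evaln x.2 c (Encodable.encode x.1) := by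
      have := Nat.Partrec.Code.primrec_evaln
      have h2 : Primrec fun x : α × ℕ => ((x.2, c), Encodable.encode x.1) :=
        (Primrec.snd.pair (Primrec.const c)).pair (Primrec.encode.comp Primrec.fst)
      have h3 := this.comp h2
      exact h3
    exact Primrec.option_isSome.comp h1
  · intro q N N' hle hN
    rw [Option.isSome_iff_exists] at hN ⊢
    obtain ⟨x, hx⟩ := hN
    exact ⟨x, evaln_mono hle hx⟩
  · intro q
    have hdom : p q ↔ (eval c (Encodable.encode q)).Dom := by
      have := congrFun hc (Encodable.encode q)
      rw [this]
      simp [Encodable.encodek, Part.assert]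
    rw [hdom, Part.dom_iff_mem]
    constructor
    · rintro ⟨x, hx⟩
      obtain ⟨N, hN⟩ := evaln_complete.1 hx
      exact ⟨N, by rw [Option.isSome_iff_exists]; exact ⟨x, hN⟩⟩
    · rintro ⟨N, hN⟩
      rw [Option.isSome_iff_exists] at hN
      obtain ⟨x, hx⟩ := hN
      exact ⟨x, evaln_complete.2 ⟨N, hx⟩⟩

end Stmt17Aux

/-- If `(X, T)` is an effectively closed `G`-dynamical system w.r.t. a finite symmetric
generating family `s` containing `1`, then the set of triples `(u, v, w)`, with `u` a
word over `S` and `v, w` binary words, such that `[v] ∩ T^{g(u)}([w] ∩ X) = ∅`, is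
recursively enumerable. -/
theorem stmt17 {G : Type} [Group G]
    {k : ℕ} (s : Fin k → G)
    (hgen : Subgroup.closure (Set.range s) = ⊤)
    (hsym : ∀ i : Fin k, ∃ j : Fin k, s j = (s i)⁻¹)
    (hone : ∃ i : Fin k, s i = 1)
    (X : Set (ℕ → Bool)) (hX : IsClosed X)
    (T : G → (ℕ → Bool) → (ℕ → Bool))
    (hTcont : ∀ g : G, ContinuousOn (T g) X)
    (hTX : ∀ g : G, T g '' X = X)
    (hT1 : ∀ x ∈ X, T 1 x = x)
    (hTmul : ∀ g h : G, ∀ x ∈ X, T (g * h) x = T g (T h x))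
    (hEff : EffAction s X T) :
    REPred fun q : List (Fin k) × List Bool × List Bool =>
      cylinder q.2.1 ∩ (T (wordEvalS s q.1) '' (cylinder q.2.2 ∩ X)) = ∅ := by
  classical
  obtain ⟨i₀, hi₀⟩ := hone
  have hEff' : REPred fun q : Fin k × List Bool × List Bool =>
      cylinder q.2.1 ∩ (T (s q.1) '' (cylinder q.2.2 ∩ X)) = ∅ := hEff
  obtain ⟨h, hPrim, hmono, hspec⟩ := Stmt17Aux.exists_halting_approx hEff'
  apply Stmt17Aux.rePred_of_exists
    (R := fun (q : List (Fin k) × List Bool × List Bool) (N : ℕ) =>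
      Stmt17Aux.check h i₀ q.1 q.2.1 q.2.2 N)
    (Stmt17Aux.primrec_check hPrim i₀)
  intro q
  exact Stmt17Aux.main_equiv hX hTcont hTX hT1 hTmul hi₀ hmono hspec q.1 q.2.1 q.2.2
end
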